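/- arXiv:1410.8628 — 4 statements merged into one kernel-verified Lean document; each statement's English description precedes it below -/
import Mathlib

section
/- For every π ∈ G_{r,n}, identified with the word π(1)π(2)⋯π(n) of its colored letters, and every integer j ≥ 0, the number Ω_π(j) of colored π-partitions with parts in [0,j]_{(r)} equals binomial(j + n − des(π), n). -/
open scoped BigOperators

/-- Lexicographic (color-first) strict order on colored letters `(value, color)`. -/
def letterLT (x y : ℕ × ℕ) : Prop :=
  x.2 < y.2 ∨ (x.2 = y.2 ∧ x.1 < y.1)

instance : DecidableRel letterLT := fun x y => by
  unfold letterLT; infer_instance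

/-- The colored permutation group `G_{r,n}`. -/
@[ext] structure ColoredPerm (r n : ℕ) where
  perm : Equiv.Perm (Fin n)
  col : Fin n → ZMod r

namespace ColoredPerm

variable {r n : ℕ}

instance : Mul (ColoredPerm r n) :=
  ⟨fun a b => ⟨a.perm * b.perm, fun i => a.col (b.perm i) + b.col i⟩⟩

instance : One (ColoredPerm r n) :=
  ⟨⟨1, fun _ => 0⟩⟩

instance : Inv (ColoredPerm r n) :=
  ⟨fun a => ⟨a.perm⁻¹, fun i => -a.col (a.perm⁻¹ i)⟩⟩

instance : Group (ColoredPerm r n) where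
  mul_assoc a b c := by
    refine ColoredPerm.ext (mul_assoc _ _ _) ?_
    funext i
    show a.col (b.perm (c.perm i)) + b.col (c.perm i) + c.col i
        = a.col ((b.perm * c.perm) i) + (b.col (c.perm i) + c.col i)
    rw [Equiv.Perm.mul_apply, add_assoc]
  one_mul a := by
    refine ColoredPerm.ext (one_mul _) ?_
    funext i
    show (0 : ZMod r) + a.col i = a.col i
    rw [zero_add]
  mul_one a := by
    refine ColoredPerm.ext (mul_one _) ?_
    funext i
    show a.col ((1 : Equiv.Perm (Fin n)) i) + 0 = a.col i
    simp
  inv_mul_cancel a := by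
    refine ColoredPerm.ext (inv_mul_cancel _) ?_
    funext i
    show -a.col (a.perm⁻¹ (a.perm i)) + a.col i = 0
    simp

/-- `ColoredPerm r n` is equivalent (as a type) to a product. -/
def toProd : ColoredPerm r n ≃ Equiv.Perm (Fin n) × (Fin n → ZMod r) where
  toFun a := (a.perm, a.col)
  invFun p := ⟨p.1, p.2⟩
  left_inv _ := rfl
  right_inv _ := rfl

instance [NeZero r] : Fintype (ColoredPerm r n) := Fintype.ofEquiv _ toProd.symm

instance : DecidableEq (ColoredPerm r n) := toProd.decidableEq

/-- The `i`-th letter of the one-line notation (0-indexed), as a pair (value, color);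
for `i = n` this is the sentinel letter `0₁`. Values are in `{1, …, n}`. -/
def letterAt (a : ColoredPerm r n) (i : ℕ) : ℕ × ℕ :=
  if h : i < n then ((a.perm ⟨i, h⟩ : ℕ) + 1, (a.col ⟨i, h⟩).val) else (0, 1)

/-- The descent set of a colored permutation (positions 0-indexed: position `i`
corresponds to the paper's `i+1 ∈ {1, …, n}`). -/
def Des (a : ColoredPerm r n) : Finset (Fin n) :=
  Finset.univ.filter fun i : Fin n => letterLT (letterAt a (i.1 + 1)) (letterAt a i.1)

/-- The descent number. -/
def des (a : ColoredPerm r n) : ℕ := (Des a).card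

/-- The internal descent number `|Des(π) ∩ {1, …, n−1}|`. -/
def intdes (a : ColoredPerm r n) : ℕ :=
  ((Des a).filter fun i : Fin n => i.1 + 1 < n).card

end ColoredPerm

/-- Weak lexicographic order on parts `(color, value)` of `[0,j]_{(r)}`. -/
def partLE (a b : ℕ × ℕ) : Prop :=
  a.1 < b.1 ∨ (a.1 = b.1 ∧ a.2 ≤ b.2)

/-- Strict lexicographic order on parts `(color, value)` of `[0,j]_{(r)}`. -/
def partLT (a b : ℕ × ℕ) : Prop :=
  a.1 < b.1 ∨ (a.1 = b.1 ∧ a.2 < b.2)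

/-- `x^{(k)}`: shift the color of the colored letter `x = (value, color)` down by `k` mod `r`. -/
def shiftLetter (r k : ℕ) (x : ℕ × ℕ) : ℕ × ℕ :=
  (x.1, (x.2 + r - k % r) % r)

/-- The `i`-th letter `π(i)` of a colored permutation, as a pair (value, color)
with value in `{1, …, n}`. -/
def letterOf {r n : ℕ} (a : ColoredPerm r n) (i : Fin n) : ℕ × ℕ :=
  ((a.perm i : ℕ) + 1, (a.col i).val)

/-- The one-line notation of a colored permutation, as a word of colored letters. -/
def word {r n : ℕ} (a : ColoredPerm r n) : List (ℕ × ℕ) :=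
  List.ofFn (letterOf a)

/-- A colored `π`-partition of the word `u = u(0) ⋯ u(m−1)` with parts in `[0,j]_{(r)}`:
a colored `P`-partition of the chain `u(0) ≺ ⋯ ≺ u(m−1) ≺ 0_1 ≺ ⋯ ≺ 0_{r−1}`
(the forced values `f(0_m) = (m,0)` of the zeros are built into the conditions). -/
def IsWordCPP (r j : ℕ) (u : List (ℕ × ℕ)) (f : Fin u.length → ℕ × ℕ) : Prop :=
  (∀ i, (f i).1 < r ∧ (f i).2 ≤ j) ∧
  (∀ i k : Fin u.length, i < k → partLE (f i) (f k)) ∧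
  (∀ i k : Fin u.length, i < k → (f i).1 = (f k).1 →
      letterLT (shiftLetter r (f i).1 (u.get k)) (shiftLetter r (f i).1 (u.get i)) →
      partLT (f i) (f k)) ∧
  (∀ i : Fin u.length, ∀ m, 1 ≤ m → m < r → partLE (f i) (m, 0)) ∧
  (∀ i : Fin u.length, ∀ m, 1 ≤ m → m < r → (f i).1 = m →
      letterLT (shiftLetter r m ((0 : ℕ), m)) (shiftLetter r m (u.get i)) →
      partLT (f i) (m, 0)) ∧
  (∀ i, (f i).2 = j → (u.get i).2 = (f i).1)

/-- `Ω_π(j)` for a word `π`: the number of colored `π`-partitions with parts in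
`[0,j]_{(r)}`. -/
noncomputable def OmegaWord (r j : ℕ) (u : List (ℕ × ℕ)) : ℕ :=
  Nat.card {f : Fin u.length → ℕ × ℕ // IsWordCPP r j u f}

/- ======================= auxiliary development ======================= -/

section OmegaProof

open Finset

/-! ### basic facts about `letterLT` -/

lemma letterLT_trans' {x y z : ℕ × ℕ} (h1 : letterLT x y) (h2 : letterLT y z) :
    letterLT x z := by
  have h1' : x.2 < y.2 ∨ (x.2 = y.2 ∧ x.1 < y.1) := h1
  have h2' : y.2 < z.2 ∨ (y.2 = z.2 ∧ y.1 < z.1) := h2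
  exact (show x.2 < z.2 ∨ (x.2 = z.2 ∧ x.1 < z.1) by omega)

lemma letterLT_asymm' {x y : ℕ × ℕ} (h1 : letterLT x y) : ¬ letterLT y x := by
  have h1' : x.2 < y.2 ∨ (x.2 = y.2 ∧ x.1 < y.1) := h1
  intro h2
  have h2' : y.2 < x.2 ∨ (y.2 = x.2 ∧ y.1 < x.1) := h2
  omega

lemma letterLT_total' {x y : ℕ × ℕ} (h : x.1 ≠ y.1) : letterLT x y ∨ letterLT y x := by
  exact (show (x.2 < y.2 ∨ (x.2 = y.2 ∧ x.1 < y.1)) ∨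
    (y.2 < x.2 ∨ (y.2 = x.2 ∧ y.1 < x.1)) by omega)

lemma letterLT_zero' {y : ℕ × ℕ} (hy : 0 < y.1) : letterLT ((0:ℕ), (0:ℕ)) y := by
  exact (show 0 < y.2 ∨ ((0:ℕ) = y.2 ∧ 0 < y.1) by omega)

/-! ### facts about `shiftLetter` -/

lemma shiftLetter_zero' {r : ℕ} (x : ℕ × ℕ) (hx : x.2 < r) : shiftLetter r 0 x = x := by
  unfold shiftLetter
  rw [Nat.zero_mod, Nat.sub_zero, Nat.add_mod_right, Nat.mod_eq_of_lt hx]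

lemma shiftLetter_self' {r m : ℕ} (hm : m < r) :
    shiftLetter r m ((0:ℕ), m) = ((0:ℕ), (0:ℕ)) := by
  show ((0:ℕ), (m + r - m % r) % r) = ((0:ℕ), (0:ℕ))
  rw [Nat.mod_eq_of_lt hm, show m + r - m = r from by omega, Nat.mod_self]

/-! ### facts about words and letters -/

lemma word_length {r n : ℕ} (a : ColoredPerm r n) : (word a).length = n := by
  simp [word]

lemma word_get {r n : ℕ} (a : ColoredPerm r n) (i : Fin (word a).length) :
    (word a).get i = letterOf a (Fin.cast (word_length a) i) :=
  List.get_ofFn (letterOf a) i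

lemma letterOf_fst_ne {r n : ℕ} (a : ColoredPerm r n) {i k : Fin n} (h : i ≠ k) :
    (letterOf a i).1 ≠ (letterOf a k).1 := by
  intro he
  have he' : (a.perm i : ℕ) + 1 = (a.perm k : ℕ) + 1 := he
  exact h (a.perm.injective (Fin.ext (by omega)))

lemma letterAt_of_lt {r n : ℕ} (a : ColoredPerm r n) {m : ℕ} (h : m < n) :
    ColoredPerm.letterAt a m = letterOf a ⟨m, h⟩ := by
  unfold ColoredPerm.letterAt letterOf
  rw [dif_pos h]

lemma mem_Des_iff {r n : ℕ} (a : ColoredPerm r n) (i : Fin n) (h : i.1 + 1 < n) :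
    i ∈ ColoredPerm.Des a ↔ letterLT (letterOf a ⟨i.1 + 1, h⟩) (letterOf a i) := by
  unfold ColoredPerm.Des
  simp only [Finset.mem_filter, Finset.mem_univ, true_and]
  rw [letterAt_of_lt a h, letterAt_of_lt a i.isLt]

lemma mem_Des_last {r n : ℕ} (a : ColoredPerm r n) (i : Fin n) (h : i.1 + 1 = n) :
    i ∈ ColoredPerm.Des a ↔ (a.col i).val ≠ 0 := by
  unfold ColoredPerm.Des
  simp only [Finset.mem_filter, Finset.mem_univ, true_and]
  have h2 : ¬ (i.1 + 1 < n) := by omega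
  unfold ColoredPerm.letterAt
  rw [dif_neg h2, dif_pos i.isLt]
  show (1 < (a.col i).val ∨ (1 = (a.col i).val ∧ 0 < (a.perm i : ℕ) + 1)) ↔
    (a.col i).val ≠ 0
  omega

/-! ### `dBelow`: number of descents strictly below a position -/

def dBelow {r n : ℕ} (a : ColoredPerm r n) (m : ℕ) : ℕ :=
  ((ColoredPerm.Des a).filter fun p => p.1 < m).card

lemma dBelow_zero {r n : ℕ} (a : ColoredPerm r n) : dBelow a 0 = 0 := by
  unfold dBelow
  rw [Finset.filter_false_of_mem, Finset.card_empty]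
  intro p _
  omega

lemma dBelow_mono {r n : ℕ} (a : ColoredPerm r n) {m m' : ℕ} (h : m ≤ m') :
    dBelow a m ≤ dBelow a m' := by
  apply Finset.card_le_card
  intro p hp
  simp only [Finset.mem_filter] at hp ⊢
  exact ⟨hp.1, by have := hp.2; omega⟩

lemma dBelow_le_des {r n : ℕ} (a : ColoredPerm r n) (m : ℕ) :
    dBelow a m ≤ ColoredPerm.des a :=
  Finset.card_filter_le _ _

lemma dBelow_succ {r n : ℕ} (a : ColoredPerm r n) (p : ℕ) (hp : p < n) :
    dBelow a (p + 1) = dBelow a p +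
      (if (⟨p, hp⟩ : Fin n) ∈ ColoredPerm.Des a then 1 else 0) := by
  classical
  by_cases hd : (⟨p, hp⟩ : Fin n) ∈ ColoredPerm.Des a
  · rw [if_pos hd]
    unfold dBelow
    have hins : (ColoredPerm.Des a).filter (fun q => q.1 < p + 1) =
        insert ⟨p, hp⟩ ((ColoredPerm.Des a).filter fun q => q.1 < p) := by
      ext q
      simp only [Finset.mem_filter, Finset.mem_insert]
      constructor
      · rintro ⟨hq, hlt⟩
        by_cases hqp : q.1 = p
        · exact Or.inl (Fin.ext hqp)
        · exact Or.inr ⟨hq, by omega⟩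
      · rintro (rfl | ⟨hq, hlt⟩)
        · exact ⟨hd, Nat.lt_succ_self p⟩
        · exact ⟨hq, by omega⟩
    rw [hins, Finset.card_insert_of_notMem]
    simp only [Finset.mem_filter]
    rintro ⟨-, hlt⟩
    exact Nat.lt_irrefl p hlt
  · rw [if_neg hd, Nat.add_zero]
    unfold dBelow
    have hfe : (ColoredPerm.Des a).filter (fun q => q.1 < p + 1) =
        (ColoredPerm.Des a).filter (fun q => q.1 < p) := by
      ext q
      simp only [Finset.mem_filter, and_congr_right_iff]
      intro hq
      constructor
      · intro hlt
        by_cases hqp : q.1 = p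
        · exact absurd ((Fin.ext hqp : q = ⟨p, hp⟩) ▸ hq) hd
        · omega
      · intro hlt
        omega
    rw [hfe]
    omega

lemma des_eq {r n : ℕ} (a : ColoredPerm r n) (h : n - 1 < n) :
    ColoredPerm.des a = dBelow a (n - 1) +
      (if (⟨n - 1, h⟩ : Fin n) ∈ ColoredPerm.Des a then 1 else 0) := by
  have h1 : ColoredPerm.des a = dBelow a n := by
    unfold ColoredPerm.des dBelow
    congr 1
    exact (Finset.filter_true_of_mem fun p _ => p.isLt).symm
  have h3 : n - 1 + 1 = n := by omega
  have h4 : dBelow a n = dBelow a (n - 1 + 1) := by rw [h3]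
  rw [h1, h4, dBelow_succ a (n - 1) h]

/-! ### monotone sequences from consecutive comparisons -/

lemma mono_of_consec {n : ℕ} (g : Fin n → ℕ)
    (h : ∀ (p : ℕ) (hp1 : p < n) (hp2 : p + 1 < n), g ⟨p, hp1⟩ ≤ g ⟨p + 1, hp2⟩) :
    ∀ i k : Fin n, i ≤ k → g i ≤ g k := by
  have key : ∀ m : ℕ, ∀ i k : Fin n, k.1 = i.1 + m → g i ≤ g k := by
    intro m
    induction m with
    | zero =>
      intro i k hk
      have he : i = k := Fin.ext (by omega)
      rw [he]
    | succ p ih =>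
      intro i k hk
      have h1 : i.1 + p < n := by have := k.isLt; omega
      have h2 : i.1 + p + 1 < n := by have := k.isLt; omega
      have hmid := ih i ⟨i.1 + p, h1⟩ rfl
      have hstep := h (i.1 + p) h1 h2
      have hke : k = ⟨i.1 + p + 1, h2⟩ := Fin.ext (show k.1 = i.1 + p + 1 by omega)
      rw [hke]
      exact le_trans hmid hstep
  intro i k hik
  exact key (k.1 - i.1) i k (by have := Fin.le_def.1 hik; omega)

/-! ### the conditions on value sequences -/

def Cond1 {r n : ℕ} (a : ColoredPerm r n) (j : ℕ) (u : Fin n → ℕ) : Prop :=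
  (∀ i, u i ≤ j) ∧ (∀ i k : Fin n, i < k → u i ≤ u k) ∧
  (∀ i k : Fin n, i < k → letterLT (letterOf a k) (letterOf a i) → u i < u k) ∧
  (∀ i, u i = j → (a.col i).val = 0)

def Cond2 {r n : ℕ} (a : ColoredPerm r n) (j : ℕ) (u : Fin n → ℕ) : Prop :=
  (∀ i, u i ≤ j) ∧ (∀ i k : Fin n, i ≤ k → u i ≤ u k) ∧
  (∀ (i : Fin n) (h : i.1 + 1 < n), i ∈ ColoredPerm.Des a → u i < u ⟨i.1 + 1, h⟩) ∧
  (∀ i : Fin n, i.1 + 1 = n → i ∈ ColoredPerm.Des a → u i < j)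

/-! ### colored `P`-partitions have all colors zero -/

lemma fst_eq_zero {r n j : ℕ} [NeZero r] {a : ColoredPerm r n}
    {f : Fin (word a).length → ℕ × ℕ} (hf : IsWordCPP r j (word a) f)
    (i : Fin (word a).length) : (f i).1 = 0 := by
  obtain ⟨h1, -, -, -, h5, -⟩ := hf
  by_contra hne
  have hk1 : 1 ≤ (f i).1 := Nat.one_le_iff_ne_zero.2 hne
  have hkr : (f i).1 < r := (h1 i).1
  have hsh : letterLT (shiftLetter r (f i).1 ((0:ℕ), (f i).1))
      (shiftLetter r (f i).1 ((word a).get i)) := by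
    rw [shiftLetter_self' hkr]
    apply letterLT_zero'
    rw [word_get]
    exact Nat.succ_pos _
  have hp := h5 i (f i).1 hk1 hkr rfl hsh
  have hp' : (f i).1 < (f i).1 ∨ ((f i).1 = (f i).1 ∧ (f i).2 < 0) := hp
  omega

lemma cond1_of_cpp {r n j : ℕ} [NeZero r] {a : ColoredPerm r n}
    {f : Fin (word a).length → ℕ × ℕ} (hf : IsWordCPP r j (word a) f) :
    Cond1 a j (fun i : Fin n => (f (Fin.cast (word_length a).symm i)).2) := by
  have h0 := fun x => fst_eq_zero hf x
  obtain ⟨h1, h2, h3, h4, h5, h6⟩ := hf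
  refine ⟨?_, ?_, ?_, ?_⟩
  · intro i
    exact (h1 (Fin.cast (word_length a).symm i)).2
  · intro i k hik
    have hik' : Fin.cast (word_length a).symm i < Fin.cast (word_length a).symm k := by
      rw [Fin.lt_def]
      exact Fin.lt_def.1 hik
    have hp : (f (Fin.cast (word_length a).symm i)).1 < (f (Fin.cast (word_length a).symm k)).1 ∨
        ((f (Fin.cast (word_length a).symm i)).1 = (f (Fin.cast (word_length a).symm k)).1 ∧
          (f (Fin.cast (word_length a).symm i)).2 ≤ (f (Fin.cast (word_length a).symm k)).2) :=
      h2 _ _ hik'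
    have e1 := h0 (Fin.cast (word_length a).symm i)
    have e2 := h0 (Fin.cast (word_length a).symm k)
    show (f (Fin.cast (word_length a).symm i)).2 ≤ (f (Fin.cast (word_length a).symm k)).2
    omega
  · intro i k hik hlt
    have hik' : Fin.cast (word_length a).symm i < Fin.cast (word_length a).symm k := by
      rw [Fin.lt_def]
      exact Fin.lt_def.1 hik
    have heq : (f (Fin.cast (word_length a).symm i)).1 =
        (f (Fin.cast (word_length a).symm k)).1 := by
      rw [h0, h0]
    have hcl1 : ((word a).get (Fin.cast (word_length a).symm k)).2 < r := by
      rw [word_get]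
      exact ZMod.val_lt _
    have hcl2 : ((word a).get (Fin.cast (word_length a).symm i)).2 < r := by
      rw [word_get]
      exact ZMod.val_lt _
    have hsh : letterLT
        (shiftLetter r (f (Fin.cast (word_length a).symm i)).1
          ((word a).get (Fin.cast (word_length a).symm k)))
        (shiftLetter r (f (Fin.cast (word_length a).symm i)).1
          ((word a).get (Fin.cast (word_length a).symm i))) := by
      rw [h0, shiftLetter_zero' _ hcl1, shiftLetter_zero' _ hcl2, word_get, word_get]
      exact hlt
    have hp : (f (Fin.cast (word_length a).symm i)).1 < (f (Fin.cast (word_length a).symm k)).1 ∨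
        ((f (Fin.cast (word_length a).symm i)).1 = (f (Fin.cast (word_length a).symm k)).1 ∧
          (f (Fin.cast (word_length a).symm i)).2 < (f (Fin.cast (word_length a).symm k)).2) :=
      h3 _ _ hik' heq hsh
    have e1 := h0 (Fin.cast (word_length a).symm i)
    have e2 := h0 (Fin.cast (word_length a).symm k)
    show (f (Fin.cast (word_length a).symm i)).2 < (f (Fin.cast (word_length a).symm k)).2
    omega
  · intro i hij
    have hp := h6 (Fin.cast (word_length a).symm i) hij
    rw [word_get, h0] at hp
    exact hp

lemma cpp_of_cond1 {r n j : ℕ} [NeZero r] {a : ColoredPerm r n} {u : Fin n → ℕ}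
    (hu : Cond1 a j u) :
    IsWordCPP r j (word a) (fun i => ((0:ℕ), u (Fin.cast (word_length a) i))) := by
  obtain ⟨h1, h2, h3, h4⟩ := hu
  refine ⟨?_, ?_, ?_, ?_, ?_, ?_⟩
  · intro i
    exact ⟨Nat.pos_of_ne_zero (NeZero.ne r), h1 _⟩
  · intro i k hik
    have hik' : Fin.cast (word_length a) i < Fin.cast (word_length a) k := by
      rw [Fin.lt_def]
      exact Fin.lt_def.1 hik
    exact Or.inr ⟨rfl, h2 _ _ hik'⟩
  · intro i k hik heq hsh
    have hik' : Fin.cast (word_length a) i < Fin.cast (word_length a) k := by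
      rw [Fin.lt_def]
      exact Fin.lt_def.1 hik
    have hcl1 : (letterOf a (Fin.cast (word_length a) k)).2 < r := ZMod.val_lt _
    have hcl2 : (letterOf a (Fin.cast (word_length a) i)).2 < r := ZMod.val_lt _
    rw [word_get, word_get] at hsh
    have hsh2 : letterLT (shiftLetter r 0 (letterOf a (Fin.cast (word_length a) k)))
        (shiftLetter r 0 (letterOf a (Fin.cast (word_length a) i))) := hsh
    rw [shiftLetter_zero' _ hcl1, shiftLetter_zero' _ hcl2] at hsh2
    exact Or.inr ⟨rfl, h3 _ _ hik' hsh2⟩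
  · intro i m h1m hmr
    exact Or.inl h1m
  · intro i m h1m hmr hm hsh
    have h0m : (0:ℕ) = m := hm
    exact absurd h1m (by omega)
  · intro i hfi
    rw [word_get]
    exact h4 _ hfi

lemma card_cpp {r n j : ℕ} [NeZero r] (a : ColoredPerm r n) :
    Nat.card {f : Fin (word a).length → ℕ × ℕ // IsWordCPP r j (word a) f} =
      Nat.card {u : Fin n → ℕ // Cond1 a j u} := by
  apply Nat.card_congr
  refine ⟨fun f => ⟨fun i : Fin n => (f.1 (Fin.cast (word_length a).symm i)).2,
      cond1_of_cpp f.2⟩,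
    fun u => ⟨fun i => ((0:ℕ), u.1 (Fin.cast (word_length a) i)), cpp_of_cond1 u.2⟩,
    ?_, ?_⟩
  · intro f
    apply Subtype.ext
    funext i
    have h0 := fst_eq_zero f.2 i
    show ((0:ℕ), (f.1 i).2) = f.1 i
    rw [← h0]
  · intro u
    exact Subtype.ext (funext fun i => rfl)

/-! ### equivalence of the two condition systems -/

lemma cond1_iff_cond2 {r n : ℕ} (hn : 1 ≤ n) (a : ColoredPerm r n) (j : ℕ)
    (u : Fin n → ℕ) : Cond1 a j u ↔ Cond2 a j u := by
  constructor
  · rintro ⟨h1, h2, h3, h4⟩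
    refine ⟨h1, ?_, ?_, ?_⟩
    · intro i k hik
      rcases hik.lt_or_eq with hl | he
      · exact h2 i k hl
      · rw [he]
    · intro i h hd
      exact h3 i ⟨i.1 + 1, h⟩ (Fin.lt_def.2 (Nat.lt_succ_self i.1))
        ((mem_Des_iff a i h).1 hd)
    · intro i hi hd
      have hne := (mem_Des_last a i hi).1 hd
      have hle := h1 i
      rcases eq_or_lt_of_le hle with he | hl
      · exact absurd (h4 i he) hne
      · exact hl
  · rintro ⟨h1, h2, h3, h4⟩
    have step : ∀ i k : Fin n, k.1 = i.1 + 1 →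
        u i < u k ∨ letterLT (letterOf a i) (letterOf a k) := by
      intro i k hk
      have h : i.1 + 1 < n := by have := k.isLt; omega
      have hke : k = ⟨i.1 + 1, h⟩ := Fin.ext hk
      subst hke
      by_cases hd : i ∈ ColoredPerm.Des a
      · exact Or.inl (h3 i h hd)
      · rw [mem_Des_iff a i h] at hd
        have hne : (letterOf a i).1 ≠ (letterOf a (⟨i.1 + 1, h⟩ : Fin n)).1 := by
          apply letterOf_fst_ne
          intro he
          have h2' : i.1 = i.1 + 1 := congrArg Fin.val he
          omega
        rcases letterLT_total' hne with hlt | hlt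
        · exact Or.inr hlt
        · exact absurd hlt hd
    have chain : ∀ m : ℕ, ∀ i k : Fin n, k.1 = i.1 + m + 1 →
        u i < u k ∨ letterLT (letterOf a i) (letterOf a k) := by
      intro m
      induction m with
      | zero =>
        intro i k hk
        exact step i k (by omega)
      | succ p ih =>
        intro i k hk
        have hmid : i.1 + p + 1 < n := by have := k.isLt; omega
        have H1 := ih i ⟨i.1 + p + 1, hmid⟩ rfl
        have H2 := step ⟨i.1 + p + 1, hmid⟩ k (show k.1 = i.1 + p + 1 + 1 by omega)
        have hum : u i ≤ u ⟨i.1 + p + 1, hmid⟩ :=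
          h2 i _ (Fin.le_def.2 (show i.1 ≤ i.1 + p + 1 by omega))
        have humk : u ⟨i.1 + p + 1, hmid⟩ ≤ u k :=
          h2 _ k (Fin.le_def.2 (show i.1 + p + 1 ≤ k.1 by omega))
        rcases H1 with H1 | H1
        · exact Or.inl (lt_of_lt_of_le H1 humk)
        · rcases H2 with H2 | H2
          · exact Or.inl (lt_of_le_of_lt hum H2)
          · exact Or.inr (letterLT_trans' H1 H2)
    have down : ∀ m : ℕ, ∀ i : Fin n, i.1 + m + 1 = n → u i = j → (a.col i).val = 0 := by
      intro m
      induction m with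
      | zero =>
        intro i hi hj
        by_contra hc
        have hd : i ∈ ColoredPerm.Des a := (mem_Des_last a i (by omega)).2 hc
        have := h4 i (by omega) hd
        omega
      | succ p ih =>
        intro i hi hj
        have hlt2 : i.1 + 1 < n := by omega
        have hle : u i ≤ u ⟨i.1 + 1, hlt2⟩ :=
          h2 i ⟨i.1 + 1, hlt2⟩ (Fin.le_def.2 (Nat.le_succ i.1))
        have hk1 : u ⟨i.1 + 1, hlt2⟩ = j := by
          have := h1 (⟨i.1 + 1, hlt2⟩ : Fin n)
          omega
        by_contra hc
        have hnd : i ∉ ColoredPerm.Des a := by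
          intro hd
          have := h3 i hlt2 hd
          omega
        rw [mem_Des_iff a i hlt2] at hnd
        have hck := ih ⟨i.1 + 1, hlt2⟩ (show i.1 + 1 + p + 1 = n by omega) hk1
        exact hnd (Or.inl
          (show (a.col (⟨i.1 + 1, hlt2⟩ : Fin n)).val < (a.col i).val by omega))
    refine ⟨h1, fun i k hik => h2 i k (le_of_lt hik), ?_, ?_⟩
    · intro i k hik hlt
      rcases chain (k.1 - i.1 - 1) i k (by have := Fin.lt_def.1 hik; omega) with H | H
      · exact H
      · exact absurd hlt (letterLT_asymm' H)
    · intro i hij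
      exact down (n - 1 - i.1) i (by have := i.isLt; omega) hij

/-! ### subtracting descent counts -/

lemma dBelow_le {r n j : ℕ} {a : ColoredPerm r n} {u : Fin n → ℕ} (hu : Cond2 a j u) :
    ∀ (p : ℕ) (hp : p < n), dBelow a p ≤ u ⟨p, hp⟩ := by
  obtain ⟨h1, h2, h3, h4⟩ := hu
  intro p
  induction p with
  | zero =>
    intro hp
    rw [dBelow_zero]
    exact Nat.zero_le _
  | succ q ih =>
    intro hp
    have hq : q < n := by omega
    have hd := dBelow_succ a q hq
    have hih := ih hq
    by_cases hmem : (⟨q, hq⟩ : Fin n) ∈ ColoredPerm.Des a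
    · rw [if_pos hmem] at hd
      have hst : u ⟨q, hq⟩ < u ⟨q + 1, hp⟩ := h3 ⟨q, hq⟩ hp hmem
      omega
    · rw [if_neg hmem] at hd
      have hle : u ⟨q, hq⟩ ≤ u ⟨q + 1, hp⟩ := h2 _ _ (Fin.le_def.2 (Nat.le_succ q))
      omega

lemma cond2_down {r n j : ℕ} (hn : 1 ≤ n) {a : ColoredPerm r n} {u : Fin n → ℕ}
    (hu : Cond2 a j u) :
    (∀ i k : Fin n, i ≤ k → u i - dBelow a i.1 ≤ u k - dBelow a k.1) ∧
      (∀ i : Fin n, u i - dBelow a i.1 + ColoredPerm.des a ≤ j) := by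
  obtain ⟨h1, h2, h3, h4⟩ := hu
  have hmono := mono_of_consec (fun i : Fin n => u i - dBelow a i.1) (by
    intro p hp1 hp2
    show u ⟨p, hp1⟩ - dBelow a p ≤ u ⟨p + 1, hp2⟩ - dBelow a (p + 1)
    have hd := dBelow_succ a p hp1
    have hb1 := dBelow_le ⟨h1, h2, h3, h4⟩ p hp1
    have hb2 := dBelow_le ⟨h1, h2, h3, h4⟩ (p + 1) hp2
    by_cases hmem : (⟨p, hp1⟩ : Fin n) ∈ ColoredPerm.Des a
    · rw [if_pos hmem] at hd
      have hst : u ⟨p, hp1⟩ < u ⟨p + 1, hp2⟩ := h3 ⟨p, hp1⟩ hp2 hmem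
      omega
    · rw [if_neg hmem] at hd
      have hle : u ⟨p, hp1⟩ ≤ u ⟨p + 1, hp2⟩ := h2 _ _ (Fin.le_def.2 (Nat.le_succ p))
      omega)
  refine ⟨fun i k hik => hmono i k hik, ?_⟩
  intro i
  have hl : n - 1 < n := by omega
  have hm' : u i - dBelow a i.1 ≤ u ⟨n - 1, hl⟩ - dBelow a (n - 1) :=
    hmono i ⟨n - 1, hl⟩ (Fin.le_def.2 (show i.1 ≤ n - 1 by have := i.isLt; omega))
  have hde := des_eq a hl
  have hb := dBelow_le ⟨h1, h2, h3, h4⟩ (n - 1) hl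
  by_cases hmem : (⟨n - 1, hl⟩ : Fin n) ∈ ColoredPerm.Des a
  · rw [if_pos hmem] at hde
    have hlt : u ⟨n - 1, hl⟩ < j := h4 ⟨n - 1, hl⟩ (show n - 1 + 1 = n by omega) hmem
    omega
  · rw [if_neg hmem] at hde
    have := h1 (⟨n - 1, hl⟩ : Fin n)
    omega

lemma cond2_up {r n j : ℕ} (hn : 1 ≤ n) (a : ColoredPerm r n) {v : Fin n → ℕ}
    (hv1 : ∀ i k : Fin n, i ≤ k → v i ≤ v k) (hv2 : ∀ i, v i + ColoredPerm.des a ≤ j) :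
    Cond2 a j (fun i => v i + dBelow a i.1) := by
  refine ⟨?_, ?_, ?_, ?_⟩
  · intro i
    show v i + dBelow a i.1 ≤ j
    have := hv2 i
    have := dBelow_le_des a i.1
    omega
  · intro i k hik
    show v i + dBelow a i.1 ≤ v k + dBelow a k.1
    have := hv1 i k hik
    have := dBelow_mono a (Fin.le_def.1 hik)
    omega
  · intro i h hmem
    show v i + dBelow a i.1 < v ⟨i.1 + 1, h⟩ + dBelow a (i.1 + 1)
    have hd := dBelow_succ a i.1 i.isLt
    rw [if_pos (show (⟨i.1, i.isLt⟩ : Fin n) ∈ ColoredPerm.Des a from hmem)] at hd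
    have := hv1 i ⟨i.1 + 1, h⟩ (Fin.le_def.2 (Nat.le_succ i.1))
    omega
  · intro i hi hmem
    have hl : n - 1 < n := by omega
    have hie : i = ⟨n - 1, hl⟩ := Fin.ext (show i.1 = n - 1 by omega)
    subst hie
    show v ⟨n - 1, hl⟩ + dBelow a (n - 1) < j
    have hde := des_eq a hl
    rw [if_pos hmem] at hde
    have := hv2 (⟨n - 1, hl⟩ : Fin n)
    omega

lemma card_cond2 {r n : ℕ} (hn : 1 ≤ n) (a : ColoredPerm r n) (j : ℕ) :
    Nat.card {u : Fin n → ℕ // Cond2 a j u} =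
      Nat.card {v : Fin n → ℕ // (∀ i k : Fin n, i ≤ k → v i ≤ v k) ∧
        ∀ i, v i + ColoredPerm.des a ≤ j} := by
  apply Nat.card_congr
  refine ⟨fun u => ⟨fun i => u.1 i - dBelow a i.1,
      (cond2_down hn u.2).1, (cond2_down hn u.2).2⟩,
    fun v => ⟨fun i => v.1 i + dBelow a i.1, cond2_up hn a v.2.1 v.2.2⟩, ?_, ?_⟩
  · intro u
    apply Subtype.ext
    funext i
    show u.1 i - dBelow a i.1 + dBelow a i.1 = u.1 i
    have h2 : dBelow a i.1 ≤ u.1 i := dBelow_le u.2 i.1 i.isLt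
    omega
  · intro v
    apply Subtype.ext
    funext i
    show v.1 i + dBelow a i.1 - dBelow a i.1 = v.1 i
    omega

/-! ### counting monotone bounded sequences -/

lemma strictMono_add_le {n N : ℕ} {w : Fin n → Fin N} (hw : StrictMono w) :
    ∀ m : ℕ, ∀ i k : Fin n, k.1 = i.1 + m → (w i).1 + m ≤ (w k).1 := by
  intro m
  induction m with
  | zero =>
    intro i k hk
    have he : i = k := Fin.ext (by omega)
    subst he
    omega
  | succ p ih =>
    intro i k hk
    have hmid : i.1 + p < n := by have := k.isLt; omega
    have h1 := ih i ⟨i.1 + p, hmid⟩ rfl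
    have h2 : w ⟨i.1 + p, hmid⟩ < w k := hw (Fin.lt_def.2 (show i.1 + p < k.1 by omega))
    have h3 := Fin.lt_def.1 h2
    omega

lemma strictMono_le_self {n N : ℕ} {w : Fin n → Fin N} (hw : StrictMono w) (i : Fin n) :
    i.1 ≤ (w i).1 := by
  have h0 : 0 < n := i.pos
  have := strictMono_add_le hw i.1 ⟨0, h0⟩ i (show i.1 = 0 + i.1 by omega)
  omega

lemma card_mono_bounded (n M : ℕ) :
    Nat.card {v : Fin n → ℕ // (∀ i k : Fin n, i ≤ k → v i ≤ v k) ∧ ∀ i, v i ≤ M} =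
      (M + n).choose n := by
  classical
  have e1 : {v : Fin n → ℕ // (∀ i k : Fin n, i ≤ k → v i ≤ v k) ∧ ∀ i, v i ≤ M} ≃
      {w : Fin n → Fin (M + n) // StrictMono w} := by
    refine ⟨fun v => ⟨fun i => ⟨v.1 i + i.1, by have h1 := v.2.2 i; have h2 := i.isLt; omega⟩,
        ?_⟩, fun w => ⟨fun i => (w.1 i).1 - i.1, ?_, ?_⟩, ?_, ?_⟩
    · intro i k hik
      have h3 := v.2.1 i k (le_of_lt hik)
      have h4 := Fin.lt_def.1 hik
      exact Fin.mk_lt_mk.2 (by omega)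
    · intro i k hik
      show (w.1 i).1 - i.1 ≤ (w.1 k).1 - k.1
      have h5 := strictMono_add_le w.2 (k.1 - i.1) i k (by have := Fin.le_def.1 hik; omega)
      have h6 := strictMono_le_self w.2 i
      have h7 := Fin.le_def.1 hik
      omega
    · intro i
      have hn0 : 0 < n := i.pos
      have hl : n - 1 < n := by omega
      have h5 := strictMono_add_le w.2 (n - 1 - i.1) i ⟨n - 1, hl⟩
        (show n - 1 = i.1 + (n - 1 - i.1) by have := i.isLt; omega)
      have hb := (w.1 ⟨n - 1, hl⟩).isLt
      have h6 := strictMono_le_self w.2 i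
      have := i.isLt
      show (w.1 i).1 - i.1 ≤ M
      omega
    · intro v
      apply Subtype.ext
      funext i
      show v.1 i + i.1 - i.1 = v.1 i
      omega
    · intro w
      apply Subtype.ext
      funext i
      apply Fin.ext
      show (w.1 i).1 - i.1 + i.1 = (w.1 i).1
      have := strictMono_le_self w.2 i
      omega
  have e2 : {w : Fin n → Fin (M + n) // StrictMono w} ≃
      {s : Finset (Fin (M + n)) // s.card = n} := by
    refine ⟨fun w => ⟨Finset.univ.image w.1, ?_⟩,
      fun s => ⟨fun i => s.1.orderEmbOfFin s.2 i, (s.1.orderEmbOfFin s.2).strictMono⟩,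
      ?_, ?_⟩
    · rw [Finset.card_image_of_injective _ w.2.injective, Finset.card_univ, Fintype.card_fin]
    · intro w
      apply Subtype.ext
      exact (Finset.orderEmbOfFin_unique _
        (fun x => Finset.mem_image_of_mem _ (Finset.mem_univ x)) w.2).symm
    · intro s
      apply Subtype.ext
      apply Finset.coe_injective
      rw [Finset.coe_image, Finset.coe_univ, Set.image_univ]
      exact s.1.range_orderEmbOfFin s.2
  rw [Nat.card_congr (e1.trans e2), Nat.card_eq_fintype_card, Fintype.card_finset_len,
    Fintype.card_fin]

end OmegaProof


open ColoredPerm in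
/-- For `π ∈ G_{r,n}` identified with its one-line word,
`Ω_π(j) = binomial(j + n − des(π), n)`. -/
theorem omegaWord_eq_choose (r n : ℕ) [NeZero r] (hn : 1 ≤ n)
    (a : ColoredPerm r n) (j : ℕ) :
    OmegaWord r j (word a) = (j + n - des a).choose n := by
  classical
  unfold OmegaWord
  rw [card_cpp (j := j) a,
    Nat.card_congr (Equiv.subtypeEquivRight fun u => cond1_iff_cond2 hn a j u),
    card_cond2 hn a j]
  by_cases hdj : ColoredPerm.des a ≤ j
  · have heq : ∀ v : Fin n → ℕ,
        ((∀ i k : Fin n, i ≤ k → v i ≤ v k) ∧ ∀ i, v i + ColoredPerm.des a ≤ j) ↔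
        ((∀ i k : Fin n, i ≤ k → v i ≤ v k) ∧ ∀ i, v i ≤ j - ColoredPerm.des a) := by
      intro v
      apply and_congr_right'
      apply forall_congr'
      intro i
      omega
    rw [Nat.card_congr (Equiv.subtypeEquivRight heq), card_mono_bounded]
    congr 1
    omega
  · have hie : IsEmpty {v : Fin n → ℕ // (∀ i k : Fin n, i ≤ k → v i ≤ v k) ∧
        ∀ i, v i + ColoredPerm.des a ≤ j} := by
      constructor
      rintro ⟨v, -, hb⟩
      have := hb ⟨0, by omega⟩
      omega
    rw [Nat.card_of_isEmpty]
    symm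
    apply Nat.choose_eq_zero_of_lt
    omega
end

section
/- If π = (σ, c) ∈ G_{r,n} is monochromatic, i.e. c(1) = c(2) = ⋯ = c(n), then for every integer j ≥ 0, Ω_{P(π)}(j) = binomial(r·j + n − intdes(π), n). -/
open scoped BigOperators

/-- A colored `P(π)`-partition with parts in `[0,j]_{(r)}`, where `P(π)` is the
disjoint union of the two chains `π(1) ≺ ⋯ ≺ π(n)` and `0_1 ≺ ⋯ ≺ 0_{r−1}`;
`f i` is the value at `π(i)` (the forced values of the zeros are omitted, and no
conditions relate the two chains). -/
def IsPPart (r n j : ℕ) (a : ColoredPerm r n) (f : Fin n → ℕ × ℕ) : Prop :=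
  (∀ i, (f i).1 < r ∧ (f i).2 ≤ j) ∧
  (∀ (i : ℕ) (h : i + 1 < n),
      partLE (f ⟨i, Nat.lt_of_succ_lt h⟩) (f ⟨i + 1, h⟩)) ∧
  (∀ (i : ℕ) (h : i + 1 < n),
      (f ⟨i, Nat.lt_of_succ_lt h⟩).1 = (f ⟨i + 1, h⟩).1 →
      letterLT
        (shiftLetter r (f ⟨i, Nat.lt_of_succ_lt h⟩).1 (letterOf a ⟨i + 1, h⟩))
        (shiftLetter r (f ⟨i, Nat.lt_of_succ_lt h⟩).1
          (letterOf a ⟨i, Nat.lt_of_succ_lt h⟩)) →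
      partLT (f ⟨i, Nat.lt_of_succ_lt h⟩) (f ⟨i + 1, h⟩)) ∧
  (∀ i, (f i).2 = j → (a.col i).val = (f i).1)

/-- The order polynomial `Ω_{P(π)}(j)`. -/
noncomputable def OmegaP (r n j : ℕ) (a : ColoredPerm r n) : ℕ :=
  Nat.card {f : Fin n → ℕ × ℕ // IsPPart r n j a f}


/-- Allowed parts: color `< r`, value `≤ j`, and value `= j` only with color `cc`. -/
def OPMOk (r cc j : ℕ) (p : ℕ × ℕ) : Prop :=
  p.1 < r ∧ p.2 ≤ j ∧ (p.2 = j → p.1 = cc)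


/-- Rank of a part in the linear order on allowed parts. -/
def OPMrk (cc j : ℕ) (p : ℕ × ℕ) : ℕ :=
  p.1 * j + p.2 + (if cc < p.1 then 1 else 0)

def OPMunrk (cc j m : ℕ) : ℕ × ℕ :=
  if m < (cc + 1) * j then (m / j, m % j)
  else if m = (cc + 1) * j then (cc, j)
  else ((m - 1) / j, (m - 1) % j)

section rkLemmas

variable {r cc j : ℕ}

lemma OPMrk_le (hcc : cc < r) {p : ℕ × ℕ} (hp : OPMOk r cc j p) :
    OPMrk cc j p ≤ r * j := by
  obtain ⟨h1, h2, h3⟩ := hp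
  unfold OPMrk
  rcases eq_or_lt_of_le h2 with h | h
  · have hpc : p.1 = cc := h3 h
    have hpj : p.1 * j = cc * j := by rw [hpc]
    have he : (if cc < p.1 then 1 else 0) = 0 := by rw [hpc]; simp
    have hle : (cc + 1) * j ≤ r * j := Nat.mul_le_mul_right _ (by omega)
    have : (cc + 1) * j = cc * j + j := by ring
    omega
  · have he : (if cc < p.1 then 1 else 0) ≤ 1 := by split <;> omega
    have hle : (p.1 + 1) * j ≤ r * j := Nat.mul_le_mul_right _ (by omega)
    have : (p.1 + 1) * j = p.1 * j + j := by ring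
    omega

lemma OPMrk_lt_of_col_lt {p q : ℕ × ℕ} (hp2 : p.2 ≤ j) (hp3 : p.2 = j → p.1 = cc)
    (h : p.1 < q.1) : OPMrk cc j p < OPMrk cc j q := by
  unfold OPMrk
  have he : (if cc < p.1 then 1 else 0) ≤ (if cc < q.1 then 1 else 0) := by
    split <;> split <;> omega
  have hle : (p.1 + 1) * j ≤ q.1 * j := Nat.mul_le_mul_right _ (by omega)
  have hd : (p.1 + 1) * j = p.1 * j + j := by ring
  rcases eq_or_lt_of_le hp2 with hj | hj
  · -- p.2 = j, so p.1 = cc, indicator of p is 0 and of q is 1 (cc < q.1)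
    have hpc : p.1 = cc := hp3 hj
    have hpj : p.1 * j = cc * j := by rw [hpc]
    have h1 : (if cc < p.1 then 1 else 0) = 0 := by rw [hpc]; simp
    have h2 : (if cc < q.1 then 1 else 0) = 1 := by rw [if_pos (by omega)]
    omega
  · omega

lemma OPMrk_lt {p q : ℕ × ℕ} (hp2 : p.2 ≤ j)
    (hp3 : p.2 = j → p.1 = cc) (h : partLT p q) : OPMrk cc j p < OPMrk cc j q := by
  rcases h with h | ⟨h1, h2⟩
  · exact OPMrk_lt_of_col_lt hp2 hp3 h
  · unfold OPMrk; rw [h1]; omega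

lemma OPMrk_le_of_partLE {p q : ℕ × ℕ} (hp2 : p.2 ≤ j)
    (hp3 : p.2 = j → p.1 = cc) (h : partLE p q) : OPMrk cc j p ≤ OPMrk cc j q := by
  rcases h with h | ⟨h1, h2⟩
  · exact le_of_lt (OPMrk_lt_of_col_lt hp2 hp3 h)
  · unfold OPMrk; rw [h1]; omega

lemma part_total (p q : ℕ × ℕ) : partLE p q ∨ partLT q p := by
  unfold partLE partLT; omega

lemma part_antisymm {p q : ℕ × ℕ} (h1 : partLE p q) (h2 : partLE q p) : p = q := by
  obtain ⟨p1, p2⟩ := p; obtain ⟨q1, q2⟩ := q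
  unfold partLE at h1 h2
  simp only [Prod.mk.injEq]
  omega

lemma partLT_le {p q : ℕ × ℕ} (h : partLT p q) : partLE p q := by
  unfold partLE partLT at *; omega

/-- rank reflects the weak order on allowed parts. -/
lemma OPM_partLE_of_rk_le {p q : ℕ × ℕ} (hp : OPMOk r cc j p) (hq : OPMOk r cc j q)
    (h : OPMrk cc j p ≤ OPMrk cc j q) : partLE p q := by
  rcases part_total p q with h' | h'
  · exact h'
  · exact absurd (OPMrk_lt hq.2.1 hq.2.2 h') (by omega)

lemma OPM_partLT_of_rk_lt {p q : ℕ × ℕ} (hp : OPMOk r cc j p) (hq : OPMOk r cc j q)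
    (h : OPMrk cc j p < OPMrk cc j q) : partLT p q := by
  rcases part_total q p with h' | h'
  · exact absurd (OPMrk_le_of_partLE hq.2.1 hq.2.2 h') (by omega)
  · exact h'

lemma OPMrk_injOn {p q : ℕ × ℕ} (hp : OPMOk r cc j p) (hq : OPMOk r cc j q)
    (h : OPMrk cc j p = OPMrk cc j q) : p = q :=
  part_antisymm (OPM_partLE_of_rk_le hp hq h.le) (OPM_partLE_of_rk_le hq hp h.ge)

lemma OPMunrk_spec (hcc : cc < r) {m : ℕ} (hm : m ≤ r * j) :
    OPMOk r cc j (OPMunrk cc j m) ∧ OPMrk cc j (OPMunrk cc j m) = m := by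
  unfold OPMunrk
  split
  · rename_i h1
    have hj : 0 < j := by
      rcases Nat.eq_zero_or_pos j with h | h
      · rw [h, Nat.mul_zero] at h1; omega
      · exact h
    have hdiv : m / j < cc + 1 := (Nat.div_lt_iff_lt_mul hj).2 (by omega)
    have hmod : m % j < j := Nat.mod_lt _ hj
    have heq : m / j * j + m % j = m := Nat.div_add_mod' m j
    have hind : (if cc < m / j then 1 else 0) = 0 := by rw [if_neg (by omega)]
    refine ⟨⟨by omega, by omega, by omega⟩, ?_⟩
    unfold OPMrk; simp only; omega
  · split
    · rename_i h1 h2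
      refine ⟨⟨hcc, le_refl _, fun _ => rfl⟩, ?_⟩
      have hd : (cc + 1) * j = cc * j + j := by ring
      unfold OPMrk
      simp only [lt_irrefl, if_false]
      omega
    · rename_i h1 h2
      have hgt : (cc + 1) * j < m := by omega
      have hj : 0 < j := by
        by_contra hj
        have : j = 0 := by omega
        rw [this] at hgt
        have : r * j = 0 := by rw [this]; ring
        omega
      have hdiv : cc + 1 ≤ (m - 1) / j := (Nat.le_div_iff_mul_le hj).2 (by omega)
      have hdivlt : (m - 1) / j < r := (Nat.div_lt_iff_lt_mul hj).2 (by
        have : r * j = j * r := by ring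
        omega)
      have hmod : (m - 1) % j < j := Nat.mod_lt _ hj
      have heq : (m - 1) / j * j + (m - 1) % j = m - 1 := Nat.div_add_mod' _ j
      have hind : (if cc < (m - 1) / j then 1 else 0) = 1 := by rw [if_pos (by omega)]
      refine ⟨⟨by omega, by omega, by omega⟩, ?_⟩
      unfold OPMrk; simp only; omega

lemma OPMunrk_rk (hcc : cc < r) {p : ℕ × ℕ} (hp : OPMOk r cc j p) :
    OPMunrk cc j (OPMrk cc j p) = p := by
  obtain ⟨h1, h2⟩ := OPMunrk_spec hcc (OPMrk_le hcc hp)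
  exact OPMrk_injOn h1 hp h2

end rkLemmas

section monoLemmas

lemma OPM_strictMono_of_succ {n : ℕ} {g : Fin n → ℕ}
    (h : ∀ (i : ℕ) (hi : i + 1 < n), g ⟨i, Nat.lt_of_succ_lt hi⟩ < g ⟨i + 1, hi⟩) :
    StrictMono g := by
  have key : ∀ d (x y : Fin n), y.1 = x.1 + d + 1 → g x < g y := by
    intro d
    induction d with
    | zero =>
      intro x y hy
      have hx1 : x.1 + 1 < n := by omega
      have : y = ⟨x.1 + 1, hx1⟩ := by apply Fin.ext; show y.1 = x.1 + 1; omega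
      rw [this]
      have := h x.1 hx1
      convert this using 2
    | succ d ih =>
      intro x y hy
      have hmid : x.1 + d + 1 < n := by omega
      have h1 : g x < g ⟨x.1 + d + 1, hmid⟩ := ih x _ rfl
      have hy1 : x.1 + d + 1 + 1 < n := by omega
      have h2 : g ⟨x.1 + d + 1, hmid⟩ < g y := by
        have : y = ⟨x.1 + d + 1 + 1, hy1⟩ := by
          apply Fin.ext; show y.1 = x.1 + d + 1 + 1; omega
        rw [this]
        have := h (x.1 + d + 1) hy1
        convert this using 2
      exact lt_trans h1 h2
  intro x y hxy
  exact key (y.1 - x.1 - 1) x y (by have := (Fin.lt_def).1 hxy; omega)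

lemma OPM_gap {n : ℕ} {g : Fin n → ℕ} (hg : StrictMono g) (x y : Fin n)
    (h : x.1 ≤ y.1) : g x + (y.1 - x.1) ≤ g y := by
  have key : ∀ d (x y : Fin n), y.1 = x.1 + d → g x + d ≤ g y := by
    intro d
    induction d with
    | zero =>
      intro x y hy
      have : y = x := by apply Fin.ext; omega
      rw [this]
      omega
    | succ d ih =>
      intro x y hy
      have hmid : x.1 + d < n := by omega
      have h1 : g x + d ≤ g ⟨x.1 + d, hmid⟩ := ih x _ rfl
      have h2 : g ⟨x.1 + d, hmid⟩ < g y := hg (by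
        rw [Fin.lt_def]; show x.1 + d < y.1; omega)
      omega
  have := key (y.1 - x.1) x y (by omega)
  omega

lemma OPM_le_apply {n : ℕ} {g : Fin n → ℕ} (hg : StrictMono g) (x : Fin n) :
    x.1 ≤ g x := by
  have h0 : 0 < n := lt_of_le_of_lt (Nat.zero_le _) x.2
  have := OPM_gap hg ⟨0, h0⟩ x (Nat.zero_le _)
  have h00 : ((⟨0, h0⟩ : Fin n) : ℕ) = 0 := rfl
  omega

/-- Counting strictly increasing functions `Fin n → {0, …, M-1}`. -/
lemma OPM_card_strictMono (n M : ℕ) :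
    Nat.card {g : Fin n → ℕ // StrictMono g ∧ ∀ i, g i < M} = M.choose n := by
  classical
  have e : {g : Fin n → ℕ // StrictMono g ∧ ∀ i, g i < M} ≃
      {s : Finset (Fin M) // s.card = n} := by
    refine
      { toFun := fun g => ⟨Finset.univ.image (fun i => (⟨g.1 i, g.2.2 i⟩ : Fin M)), ?_⟩
        invFun := fun s => ⟨fun i => (s.1.orderEmbOfFin s.2 i : ℕ), ?_, ?_⟩
        left_inv := ?_
        right_inv := ?_ }
    · rw [Finset.card_image_of_injective _ (fun i i' hii => g.2.1.injective
        (by simpa using congrArg Fin.val hii))]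
      simp
    · exact fun x y hxy => Fin.val_strictMono ((s.1.orderEmbOfFin s.2).strictMono hxy)
    · exact fun i => (s.1.orderEmbOfFin s.2 i).2
    · rintro ⟨g, hg, hb⟩
      apply Subtype.ext
      funext i
      have hmem : ∀ x, (⟨g x, hb x⟩ : Fin M) ∈
          Finset.univ.image (fun i => (⟨g i, hb i⟩ : Fin M)) :=
        fun x => Finset.mem_image_of_mem _ (Finset.mem_univ x)
      have hmono : StrictMono (fun x => (⟨g x, hb x⟩ : Fin M)) := by
        intro x y hxy
        simp only [Fin.mk_lt_mk]
        exact hg hxy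
      have := Finset.orderEmbOfFin_unique
        (s := Finset.univ.image (fun i => (⟨g i, hb i⟩ : Fin M)))
        (by rw [Finset.card_image_of_injective _ hmono.injective]; simp) hmem hmono
      simp only
      rw [← this]
    · rintro ⟨s, hs⟩
      apply Subtype.ext
      simp only
      have heta : (fun i => (⟨(s.orderEmbOfFin hs i : ℕ),
          (s.orderEmbOfFin hs i).2⟩ : Fin M)) = fun i => s.orderEmbOfFin hs i := by
        funext i; apply Fin.ext; rfl
      rw [heta]
      apply Finset.coe_injective
      rw [Finset.coe_image, Finset.coe_univ, Set.image_univ]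
      exact Finset.range_orderEmbOfFin s hs
  rw [Nat.card_congr e, Nat.card_eq_fintype_card, Fintype.card_finset_len,
    Fintype.card_fin]

end monoLemmas

section descents

variable {r n : ℕ}

/-- The value (as a natural number, `σ(i)+1`, or `0` out of range) at position `i`. -/
def OPMv (a : ColoredPerm r n) (i : ℕ) : ℕ :=
  if h : i < n then (a.perm ⟨i, h⟩ : ℕ) + 1 else 0

/-- Internal descent of the underlying permutation at position `i`. -/
def OPMdesc (a : ColoredPerm r n) (i : ℕ) : Prop :=
  i + 1 < n ∧ OPMv a (i + 1) < OPMv a i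

instance (a : ColoredPerm r n) : DecidablePred (OPMdesc a) := fun i => by
  unfold OPMdesc; infer_instance

/-- Number of internal descents below position `i`. -/
def OPMdc (a : ColoredPerm r n) (i : ℕ) : ℕ :=
  ((Finset.range i).filter (OPMdesc a)).card

/-- Number of non-descents below position `i`. -/
def OPMoff (a : ColoredPerm r n) (i : ℕ) : ℕ :=
  ((Finset.range i).filter (fun t => ¬ OPMdesc a t)).card

lemma OPMdc_add_off (a : ColoredPerm r n) (i : ℕ) :
    OPMdc a i + OPMoff a i = i := by
  unfold OPMdc OPMoff
  rw [Finset.card_filter_add_card_filter_not, Finset.card_range]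

lemma OPMoff_succ (a : ColoredPerm r n) (i : ℕ) :
    OPMoff a (i + 1) = OPMoff a i + (if OPMdesc a i then 0 else 1) := by
  unfold OPMoff
  rw [Finset.range_add_one, Finset.filter_insert]
  split
  · rename_i h
    rw [Finset.card_insert_of_notMem (fun hmem => by
      rw [Finset.mem_filter, Finset.mem_range] at hmem; omega)]
  · rename_i h
    rw [not_not] at h
    simp [h]

lemma OPMdc_mono (a : ColoredPerm r n) {b c : ℕ} (h : b ≤ c) :
    OPMdc a b ≤ OPMdc a c :=
  Finset.card_le_card (Finset.filter_subset_filter _ (Finset.range_subset_range.2 h))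

lemma OPMdc_le_add (a : ColoredPerm r n) {b c : ℕ} (h : b ≤ c) :
    OPMdc a c ≤ OPMdc a b + (c - b) := by
  have hsub : (Finset.range c).filter (OPMdesc a) ⊆
      ((Finset.range b).filter (OPMdesc a)) ∪ Finset.Ico b c := by
    intro t ht
    rw [Finset.mem_filter, Finset.mem_range] at ht
    rw [Finset.mem_union, Finset.mem_filter, Finset.mem_range, Finset.mem_Ico]
    by_cases hb : t < b
    · exact Or.inl ⟨hb, ht.2⟩
    · exact Or.inr (by omega)
  calc OPMdc a c ≤ (((Finset.range b).filter (OPMdesc a)) ∪ Finset.Ico b c).card :=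
        Finset.card_le_card hsub
    _ ≤ OPMdc a b + (Finset.Ico b c).card := Finset.card_union_le _ _
    _ = OPMdc a b + (c - b) := by rw [Nat.card_Ico]

lemma OPMdc_last (a : ColoredPerm r n) : OPMdc a n = OPMdc a (n - 1) := by
  unfold OPMdc
  apply le_antisymm
  · apply Finset.card_le_card
    intro t ht
    rw [Finset.mem_filter, Finset.mem_range] at ht ⊢
    exact ⟨by have := ht.2.1; omega, ht.2⟩
  · apply Finset.card_le_card
    apply Finset.filter_subset_filter
    apply Finset.range_subset_range.2
    omega

open ColoredPerm in
lemma OPM_intdes [NeZero r] (a : ColoredPerm r n)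
    (hmono : ∀ i i' : Fin n, a.col i = a.col i') : intdes a = OPMdc a n := by
  have hdesiff : ∀ (t : ℕ), t + 1 < n →
      (letterLT (letterAt a (t + 1)) (letterAt a t) ↔ OPMv a (t + 1) < OPMv a t) := by
    intro t h
    have h0 : t < n := by omega
    unfold letterAt letterLT OPMv
    rw [dif_pos h, dif_pos h0, dif_pos h, dif_pos h0]
    simp only
    have hcols : (a.col ⟨t + 1, h⟩).val = (a.col ⟨t, h0⟩).val := by
      rw [hmono ⟨t + 1, h⟩ ⟨t, h0⟩]
    constructor
    · rintro (hlt | ⟨-, hlt⟩)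
      · omega
      · exact hlt
    · intro hlt
      exact Or.inr ⟨hcols, hlt⟩
  unfold intdes Des OPMdc
  rw [Finset.filter_filter]
  apply Finset.card_bij (fun (i : Fin n) _ => i.1)
  · intro i hi
    rw [Finset.mem_filter] at hi
    rw [Finset.mem_filter, Finset.mem_range]
    obtain ⟨-, hl, hi1⟩ := hi
    exact ⟨i.2, hi1, (hdesiff i.1 hi1).1 hl⟩
  · intro i _ i' _ hii
    exact Fin.ext hii
  · intro t ht
    rw [Finset.mem_filter, Finset.mem_range] at ht
    obtain ⟨htn, ht1, htd⟩ := ht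
    refine ⟨⟨t, htn⟩, ?_, rfl⟩
    rw [Finset.mem_filter]
    exact ⟨Finset.mem_univ _, (hdesiff t ht1).2 htd, ht1⟩

open ColoredPerm in
lemma OPM_isppart_iff [NeZero r] (a : ColoredPerm r n) {cc : ℕ}
    (hcc : ∀ i : Fin n, (a.col i).val = cc) (j : ℕ) (f : Fin n → ℕ × ℕ) :
    IsPPart r n j a f ↔
      (∀ i, OPMOk r cc j (f i)) ∧
      (∀ (i : ℕ) (h : i + 1 < n),
        partLE (f ⟨i, Nat.lt_of_succ_lt h⟩) (f ⟨i + 1, h⟩) ∧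
        (OPMdesc a i → partLT (f ⟨i, Nat.lt_of_succ_lt h⟩) (f ⟨i + 1, h⟩))) := by
  have hshift : ∀ (k : ℕ) (i : ℕ) (h : i + 1 < n),
      (letterLT (shiftLetter r k (letterOf a ⟨i + 1, h⟩))
          (shiftLetter r k (letterOf a ⟨i, Nat.lt_of_succ_lt h⟩)) ↔
        OPMv a (i + 1) < OPMv a i) := by
    intro k i h
    unfold shiftLetter letterOf letterLT OPMv
    rw [dif_pos h, dif_pos (Nat.lt_of_succ_lt h)]
    simp only
    have hcols : (a.col ⟨i + 1, h⟩).val = (a.col ⟨i, Nat.lt_of_succ_lt h⟩).val := by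
      rw [hcc, hcc]
    rw [hcols]
    constructor
    · rintro (hlt | ⟨-, hlt⟩)
      · omega
      · exact hlt
    · intro hlt
      exact Or.inr ⟨rfl, hlt⟩
  constructor
  · rintro ⟨c1, c2, c3, c4⟩
    refine ⟨fun i => ⟨(c1 i).1, (c1 i).2, fun hj => by rw [← c4 i hj, hcc]⟩,
      fun i h => ⟨c2 i h, fun hd => ?_⟩⟩
    by_cases hcol : (f ⟨i, Nat.lt_of_succ_lt h⟩).1 = (f ⟨i + 1, h⟩).1
    · exact c3 i h hcol ((hshift _ i h).2 hd.2)
    · rcases c2 i h with h' | h'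
      · exact Or.inl h'
      · exact absurd h'.1 hcol
  · rintro ⟨hok, hrel⟩
    refine ⟨fun i => ⟨(hok i).1, (hok i).2.1⟩, fun i h => (hrel i h).1,
      fun i h _ hlt => (hrel i h).2 ⟨h, (hshift _ i h).1 hlt⟩,
      fun i hj => by rw [hcc]; exact ((hok i).2.2 hj).symm⟩

end descents

open ColoredPerm in
/-- If `π ∈ G_{r,n}` is monochromatic then
`Ω_{P(π)}(j) = binomial(rj + n − intdes(π), n)`. -/
theorem omegaP_monochromatic (r n : ℕ) [NeZero r] (hn : 1 ≤ n)
    (a : ColoredPerm r n) (hmono : ∀ i i' : Fin n, a.col i = a.col i')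
    (j : ℕ) :
    OmegaP r n j a = (r * j + n - intdes a).choose n := by
  classical
  have hcc : ∀ i : Fin n, (a.col i).val = (a.col ⟨0, hn⟩).val := fun i => by
    rw [hmono i ⟨0, hn⟩]
  set cc := (a.col ⟨0, hn⟩).val with hccdef
  have hccr : cc < r := ZMod.val_lt _
  have hDval : intdes a = OPMdc a n := OPM_intdes a hmono
  have hDoff : ∀ i, OPMdc a i + OPMoff a i = i := OPMdc_add_off a
  have hDlast : OPMdc a n = OPMdc a (n - 1) := OPMdc_last a
  have hDn : OPMdc a n ≤ n - 1 := by
    have h1 := hDoff (n - 1)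
    omega
  have hM : r * j + n - OPMdc a n = r * j + (n - OPMdc a n) :=
    Nat.add_sub_assoc (by omega) _
  -- every admissible strictly increasing `g` stays in the right window
  have key : ∀ (g : Fin n → ℕ), StrictMono g → (∀ i, g i < r * j + n - OPMdc a n) →
      ∀ i : Fin n, OPMoff a i.1 ≤ g i ∧ g i - OPMoff a i.1 ≤ r * j := by
    intro g hg hb i
    have h1 : i.1 ≤ g i := OPM_le_apply hg i
    have h2 := hDoff i.1
    have hi2 : i.1 < n := i.2
    have hlast : n - 1 < n := by omega
    have h3 : g i + ((n - 1) - i.1) ≤ g ⟨n - 1, hlast⟩ := by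
      have := OPM_gap hg i ⟨n - 1, hlast⟩ (by show i.1 ≤ n - 1; omega)
      have hval : ((⟨n - 1, hlast⟩ : Fin n) : ℕ) = n - 1 := rfl
      omega
    have h4 : g ⟨n - 1, hlast⟩ < r * j + n - OPMdc a n := hb _
    rw [hM] at h4
    have h5 : OPMdc a n ≤ OPMdc a i.1 + ((n - 1) - i.1) := by
      rw [hDlast]
      exact OPMdc_le_add a (by omega)
    have h6 : OPMdc a i.1 ≤ OPMdc a n := OPMdc_mono a (by omega)
    omega
  rw [hDval]
  unfold OmegaP
  rw [← OPM_card_strictMono n (r * j + n - OPMdc a n)]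
  apply Nat.card_congr
  refine
    { toFun := fun f =>
        ⟨fun i => OPMrk cc j (f.1 i) + OPMoff a i.1, ?_, ?_⟩
      invFun := fun g =>
        ⟨fun i => OPMunrk cc j (g.1 i - OPMoff a i.1), ?_⟩
      left_inv := ?_
      right_inv := ?_ }
  · -- strict monotonicity
    obtain ⟨f, hf⟩ := f
    rw [OPM_isppart_iff a hcc j] at hf
    apply OPM_strictMono_of_succ
    intro i hi
    have hoffs := OPMoff_succ a i
    have hval0 : ((⟨i, Nat.lt_of_succ_lt hi⟩ : Fin n) : ℕ) = i := rfl
    have hval1 : ((⟨i + 1, hi⟩ : Fin n) : ℕ) = i + 1 := rfl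
    simp only [hval0, hval1]
    by_cases hd : OPMdesc a i
    · have hlt : OPMrk cc j (f ⟨i, Nat.lt_of_succ_lt hi⟩) <
          OPMrk cc j (f ⟨i + 1, hi⟩) :=
        OPMrk_lt (hf.1 _).2.1 (hf.1 _).2.2 ((hf.2 i hi).2 hd)
      rw [if_pos hd] at hoffs
      omega
    · have hle : OPMrk cc j (f ⟨i, Nat.lt_of_succ_lt hi⟩) ≤
          OPMrk cc j (f ⟨i + 1, hi⟩) :=
        OPMrk_le_of_partLE (hf.1 _).2.1 (hf.1 _).2.2 (hf.2 i hi).1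
      rw [if_neg hd] at hoffs
      omega
  · -- boundedness
    obtain ⟨f, hf⟩ := f
    rw [OPM_isppart_iff a hcc j] at hf
    intro i
    show OPMrk cc j (f i) + OPMoff a i.1 < r * j + n - OPMdc a n
    have h1 : OPMrk cc j (f i) ≤ r * j := OPMrk_le hccr (hf.1 i)
    have h2 := hDoff i.1
    have hi2 : i.1 < n := i.2
    have h5 : OPMdc a n ≤ OPMdc a i.1 + ((n - 1) - i.1) := by
      rw [hDlast]
      exact OPMdc_le_add a (by omega)
    have h6 : OPMdc a i.1 ≤ OPMdc a n := OPMdc_mono a (by omega)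
    rw [hM]
    omega
  · -- the inverse map produces a `P`-partition
    obtain ⟨g, hg, hb⟩ := g
    rw [OPM_isppart_iff a hcc j]
    have hk : ∀ i : Fin n, OPMoff a i.1 ≤ g i ∧ g i - OPMoff a i.1 ≤ r * j :=
      key g hg hb
    have hok : ∀ i : Fin n,
        OPMOk r cc j (OPMunrk cc j (g i - OPMoff a i.1)) ∧
          OPMrk cc j (OPMunrk cc j (g i - OPMoff a i.1)) = g i - OPMoff a i.1 :=
      fun i => OPMunrk_spec hccr (hk i).2
    refine ⟨fun i => (hok i).1, fun i h => ?_⟩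
    have hoffs := OPMoff_succ a i
    have hsucc : g ⟨i, Nat.lt_of_succ_lt h⟩ < g ⟨i + 1, h⟩ := by
      apply hg
      rw [Fin.lt_def]
      show i < i + 1
      omega
    have hk0 := hk ⟨i, Nat.lt_of_succ_lt h⟩
    have hk1 := hk ⟨i + 1, h⟩
    have hval0 : ((⟨i, Nat.lt_of_succ_lt h⟩ : Fin n) : ℕ) = i := rfl
    have hval1 : ((⟨i + 1, h⟩ : Fin n) : ℕ) = i + 1 := rfl
    rw [hval0] at hk0
    rw [hval1] at hk1
    have hoffA : OPMoff a (i + 1) ≤ OPMoff a i + 1 := by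
      rw [hoffs]; split <;> omega
    have hoffB : OPMoff a i ≤ OPMoff a (i + 1) := by
      rw [hoffs]; split <;> omega
    constructor
    · apply OPM_partLE_of_rk_le (hok _).1 (hok _).1
      rw [(hok _).2, (hok _).2, hval0, hval1]
      omega
    · intro hd
      apply OPM_partLT_of_rk_lt (hok _).1 (hok _).1
      rw [(hok _).2, (hok _).2, hval0, hval1]
      rw [if_pos hd] at hoffs
      omega
  · -- left inverse
    rintro ⟨f, hf⟩
    apply Subtype.ext
    funext i
    show OPMunrk cc j (OPMrk cc j (f i) + OPMoff a i.1 - OPMoff a i.1) = f i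
    rw [Nat.add_sub_cancel]
    exact OPMunrk_rk hccr (((OPM_isppart_iff a hcc j f).1 hf).1 i)
  · -- right inverse
    rintro ⟨g, hg, hb⟩
    apply Subtype.ext
    funext i
    show OPMrk cc j (OPMunrk cc j (g i - OPMoff a i.1)) + OPMoff a i.1 = g i
    have hk := key g hg hb i
    rw [(OPMunrk_spec hccr hk.2).2]
    omega
end

section
/- Let π = (σ, c) ∈ G_{r,n} be non-monochromatic, let i be the largest index with c(1) = c(2) = ⋯ = c(i), and set b = c(i+1). Define ρ(π) = (σ, c') ∈ G_{r,n} by c'(s) = b for 1 ≤ s ≤ i and c'(s) = c(s) for i < s ≤ n. If des(π) = des(ρ(π)), then Ω_{P(π)}(j) = Ω_{P(ρ(π))}(j) for every integer j ≥ 0. -/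
open scoped BigOperators

/-- `ρ(π)`: recolor the first `i` letters (0-indexed positions `0, …, i−1`) of `π`
with the color of the letter at position `i`. -/
def rho {r n : ℕ} (a : ColoredPerm r n) (i : ℕ) (h : i < n) : ColoredPerm r n :=
  ⟨a.perm, fun s => if s.1 < i then a.col ⟨i, h⟩ else a.col s⟩


/-! ### Auxiliary machinery for the proof -/

def phi (s d j : ℕ) (v : ℕ × ℕ) : ℕ × ℕ :=
  if j = 0 then (d, 0)
  else if s < d then
    (if v.1 < s ∨ d < v.1 ∨ (v.1 = s ∧ v.2 < j) then v
     else if v.2 + 1 < j ∨ v.1 = d then (v.1, v.2 + 1)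
     else (v.1 + 1, 0))
  else if d < s then
    (if v.1 ≤ d ∨ s < v.1 then v
     else if 1 ≤ v.2 then (v.1, v.2 - 1)
     else if v.1 = d + 1 then (d, j)
     else (v.1 - 1, j - 1))
  else v

def Dm (r s j : ℕ) (v : ℕ × ℕ) : Prop := v.1 < r ∧ v.2 ≤ j ∧ (v.2 = j → v.1 = s)

def strictA (r c0 b k : ℕ) : Prop :=
  (if k ≤ b then b - k else b + r - k) < (if k ≤ c0 then c0 - k else c0 + r - k)

def rnk (s j : ℕ) (v : ℕ × ℕ) : ℕ := v.1 * j + (if s < v.1 then 1 else 0) + v.2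

theorem phi_dom {r s d j : ℕ} (hs : s < r) (hd : d < r) (v : ℕ × ℕ)
    (hv : Dm r s j v) : Dm r d j (phi s d j v) := by
  obtain ⟨k, u⟩ := v
  unfold Dm phi at *
  split_ifs <;> simp_all <;> omega

theorem phi_rnk {r s d j : ℕ} (hs : s < r) (hd : d < r) (hsd : s ≠ d) (v : ℕ × ℕ)
    (hv : Dm r s j v) : rnk d j (phi s d j v) = rnk s j v := by
  obtain ⟨k, u⟩ := v
  obtain ⟨h1, h2, h3⟩ := hv
  simp only at h1 h2 h3
  have e2 : 1 ≤ k → (k - 1) * j + j = k * j := by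
    intro h
    cases k with
    | zero => omega
    | succ m => simp only [Nat.succ_sub_one]; ring
  unfold phi rnk
  split_ifs <;> simp only [Prod.mk.injEq, not_or, not_and, not_lt] at * <;>
    subst_vars <;> ring_nf at * <;> omega

theorem rnk_fst_lt {r s j : ℕ} {v w : ℕ × ℕ} (hv : Dm r s j v) (hw : Dm r s j w)
    (h : v.1 < w.1) : rnk s j v < rnk s j w := by
  obtain ⟨k, u⟩ := v; obtain ⟨k', u'⟩ := w
  simp only at h
  have h1 : (k + 1) * j ≤ k' * j := Nat.mul_le_mul_right _ (by omega)
  have h2 : (k + 1) * j = k * j + j := by ring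
  simp only [Dm] at hv hw
  simp only [rnk]
  split_ifs <;> omega

theorem rnk_le_iff {r s j : ℕ} {v w : ℕ × ℕ} (hv : Dm r s j v) (hw : Dm r s j w) :
    rnk s j v ≤ rnk s j w ↔ partLE v w := by
  rcases lt_trichotomy v.1 w.1 with h | h | h
  · have := rnk_fst_lt hv hw h
    unfold partLE; omega
  · obtain ⟨k, u⟩ := v; obtain ⟨k', u'⟩ := w
    simp only at h; subst h
    simp only [rnk, partLE]; split_ifs <;> simp_all <;> omega
  · have := rnk_fst_lt hw hv h
    unfold partLE; omega

theorem rnk_lt_iff {r s j : ℕ} {v w : ℕ × ℕ} (hv : Dm r s j v) (hw : Dm r s j w) :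
    rnk s j v < rnk s j w ↔ partLT v w := by
  rcases lt_trichotomy v.1 w.1 with h | h | h
  · have := rnk_fst_lt hv hw h
    unfold partLT; omega
  · obtain ⟨k, u⟩ := v; obtain ⟨k', u'⟩ := w
    simp only at h; subst h
    simp only [rnk, partLT]; split_ifs <;> simp_all <;> omega
  · have := rnk_fst_lt hw hv h
    unfold partLT; omega

theorem partLE_antisymm' {v w : ℕ × ℕ} (h1 : partLE v w) (h2 : partLE w v) : v = w := by
  obtain ⟨k, u⟩ := v; obtain ⟨k', u'⟩ := w
  unfold partLE at *
  simp only [Prod.mk.injEq]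
  omega

theorem phi_inv {r s d j : ℕ} (hs : s < r) (hd : d < r) (hsd : s ≠ d) (v : ℕ × ℕ)
    (hv : Dm r s j v) : phi d s j (phi s d j v) = v := by
  have d1 := phi_dom hs hd v hv
  have d2 := phi_dom hd hs _ d1
  have r1 := phi_rnk hs hd hsd v hv
  have r2 := phi_rnk hd hs (Ne.symm hsd) _ d1
  exact partLE_antisymm' ((rnk_le_iff d2 hv).mp (by omega)) ((rnk_le_iff hv d2).mp (by omega))

theorem phi_le {r s d j : ℕ} (hs : s < r) (hd : d < r) (hsd : s ≠ d) {v w : ℕ × ℕ}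
    (hv : Dm r s j v) (hw : Dm r s j w) (h : partLE v w) :
    partLE (phi s d j v) (phi s d j w) := by
  refine (rnk_le_iff (phi_dom hs hd v hv) (phi_dom hs hd w hw)).mp ?_
  rw [phi_rnk hs hd hsd v hv, phi_rnk hs hd hsd w hw]
  exact (rnk_le_iff hv hw).mpr h

theorem phi_lt {r s d j : ℕ} (hs : s < r) (hd : d < r) (hsd : s ≠ d) {v w : ℕ × ℕ}
    (hv : Dm r s j v) (hw : Dm r s j w) (h : partLT v w) :
    partLT (phi s d j v) (phi s d j w) := by
  refine (rnk_lt_iff (phi_dom hs hd v hv) (phi_dom hs hd w hw)).mp ?_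
  rw [phi_rnk hs hd hsd v hv, phi_rnk hs hd hsd w hw]
  exact (rnk_lt_iff hv hw).mpr h

theorem jun1 {r j c0 b : ℕ} (hc : c0 < r) (hb : b < r) (hne : c0 ≠ b)
    (v T : ℕ × ℕ) (hv : Dm r c0 j v)
    (hT : T.1 < r ∧ T.2 ≤ j ∧ (T.2 = j → T.1 = b)) :
    (partLE v T ∧ (v.1 = T.1 → strictA r c0 b v.1 → partLT v T)) ↔
    (partLE (phi c0 b j v) T ∧
      ((phi c0 b j v).1 = T.1 → b < c0 → partLT (phi c0 b j v) T)) := by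
  obtain ⟨k, u⟩ := v; obtain ⟨k', u'⟩ := T
  simp only [Dm] at hv
  simp only at hT
  unfold phi
  split_ifs <;>
    (simp only [strictA, partLE, partLT]; split_ifs <;> omega)

theorem jun2 {r j c0 b : ℕ} (hc : c0 < r) (hb : b < r) (hne : c0 ≠ b)
    (v T : ℕ × ℕ) (hv : Dm r b j v)
    (hT : T.1 < r ∧ T.2 ≤ j ∧ (T.2 = j → T.1 = b)) :
    (partLE v T ∧ (v.1 = T.1 → b < c0 → partLT v T)) ↔
    (partLE (phi b c0 j v) T ∧
      ((phi b c0 j v).1 = T.1 → strictA r c0 b (phi b c0 j v).1 →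
        partLT (phi b c0 j v) T)) := by
  obtain ⟨k, u⟩ := v; obtain ⟨k', u'⟩ := T
  simp only [Dm] at hv
  simp only at hT
  unfold phi
  split_ifs <;>
    (simp only [strictA, partLE, partLT]; split_ifs <;> omega)

theorem shift_same {r k x1 y1 c : ℕ} :
    letterLT (shiftLetter r k (x1, c)) (shiftLetter r k (y1, c)) ↔ x1 < y1 := by
  simp [letterLT, shiftLetter]

theorem shiftc {r k x : ℕ} (hk : k < r) (hx : x < r) :
    (x + r - k % r) % r = if k ≤ x then x - k else x + r - k := by
  rw [Nat.mod_eq_of_lt hk]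
  split_ifs with h
  · have e : x + r - k = (x - k) + r := by omega
    rw [e, Nat.add_mod_right, Nat.mod_eq_of_lt (by omega)]
  · exact Nat.mod_eq_of_lt (by omega)

theorem shift_diff {r k x1 y1 cx cy : ℕ} (hk : k < r) (hx : cx < r) (hy : cy < r)
    (hne : cx ≠ cy) :
    letterLT (shiftLetter r k (x1, cx)) (shiftLetter r k (y1, cy)) ↔
      strictA r cy cx k := by
  simp only [letterLT, shiftLetter, strictA]
  rw [shiftc hk hx, shiftc hk hy]
  split_ifs <;> omega

/-- The recoloring map on `P`-partitions. -/
def PhiMap (B C j i : ℕ) {n : ℕ} (f : Fin n → ℕ × ℕ) : Fin n → ℕ × ℕ :=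
  fun t => if t.1 < i then phi B C j (f t) else f t

theorem PhiMap_lt {B C j i n : ℕ} {f : Fin n → ℕ × ℕ} {t : Fin n} (ht : t.1 < i) :
    PhiMap B C j i f t = phi B C j (f t) := if_pos ht

theorem PhiMap_ge {B C j i n : ℕ} {f : Fin n → ℕ × ℕ} {t : Fin n} (ht : ¬ t.1 < i) :
    PhiMap B C j i f t = f t := if_neg ht


theorem colR_lt {r n : ℕ} (a : ColoredPerm r n) {i : ℕ} (hi2 : i < n)
    {t : Fin n} (ht : t.1 < i) : (rho a i hi2).col t = a.col ⟨i, hi2⟩ := if_pos ht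

theorem colR_ge {r n : ℕ} (a : ColoredPerm r n) {i : ℕ} (hi2 : i < n)
    {t : Fin n} (ht : ¬ t.1 < i) : (rho a i hi2).col t = a.col t := if_neg ht

theorem letR_ge {r n : ℕ} (a : ColoredPerm r n) {i : ℕ} (hi2 : i < n)
    {t : Fin n} (ht : ¬ t.1 < i) : letterOf (rho a i hi2) t = letterOf a t := by
  unfold letterOf
  rw [colR_ge a hi2 ht]
  rfl

theorem letR_lt {r n : ℕ} (a : ColoredPerm r n) {i : ℕ} (hi2 : i < n)
    {t : Fin n} (ht : t.1 < i) :
    letterOf (rho a i hi2) t = ((a.perm t : ℕ) + 1, (a.col ⟨i, hi2⟩).val) := by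
  unfold letterOf
  rw [colR_lt a hi2 ht]
  rfl

theorem letA_lt {r n : ℕ} (a : ColoredPerm r n) {i : ℕ} (hn : 0 < n)
    (hconst : ∀ s : Fin n, s.1 < i → a.col s = a.col ⟨0, hn⟩)
    {t : Fin n} (ht : t.1 < i) :
    letterOf a t = ((a.perm t : ℕ) + 1, (a.col ⟨0, hn⟩).val) := by
  unfold letterOf
  rw [hconst t ht]

open ColoredPerm in
theorem step1 {r n j i : ℕ} [NeZero r] (a : ColoredPerm r n)
    (hi1 : 1 ≤ i) (hi2 : i < n)
    (hconst : ∀ s : Fin n, s.1 < i → a.col s = a.col ⟨0, by omega⟩)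
    (hbreak : a.col ⟨i, hi2⟩ ≠ a.col ⟨0, by omega⟩)
    (hdesiff : ((a.col ⟨i, hi2⟩).val < (a.col ⟨0, by omega⟩).val ↔
      (a.perm ⟨i, hi2⟩ : ℕ) < (a.perm ⟨i - 1, by omega⟩ : ℕ)))
    (f : Fin n → ℕ × ℕ) (hf : IsPPart r n j (rho a i hi2) f) :
    IsPPart r n j a
      (PhiMap (a.col ⟨i, hi2⟩).val (a.col ⟨0, by omega⟩).val j i f) := by
  have hn : 0 < n := by omega
  set B := (a.col ⟨i, hi2⟩).val with hBdef
  set C := (a.col ⟨0, hn⟩).val with hCdef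
  have hB : B < r := ZMod.val_lt _
  have hC : C < r := ZMod.val_lt _
  have hBC : B ≠ C := fun h => hbreak (ZMod.val_injective _ h)
  obtain ⟨hf1, hf2, hf3, hf4⟩ := hf
  have hdmf : ∀ t : Fin n, t.1 < i → Dm r B j (f t) := by
    intro t ht
    refine ⟨(hf1 t).1, (hf1 t).2, fun h2 => ?_⟩
    rw [← hf4 t h2, colR_lt a hi2 ht]
  refine ⟨?_, ?_, ?_, ?_⟩
  · intro t
    by_cases ht : t.1 < i
    · rw [PhiMap_lt ht]
      exact ⟨(phi_dom hB hC _ (hdmf t ht)).1, (phi_dom hB hC _ (hdmf t ht)).2.1⟩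
    · rw [PhiMap_ge ht]
      exact hf1 t
  · intro t h
    by_cases h1 : t + 1 < i
    · have ht : t < i := by omega
      rw [PhiMap_lt (t := ⟨t, by omega⟩) ht, PhiMap_lt (t := ⟨t + 1, h⟩) h1]
      exact phi_le hB hC hBC (hdmf _ ht) (hdmf _ h1) (hf2 t h)
    · by_cases h2 : t < i
      · -- junction: t = i - 1, t + 1 = i
        obtain rfl : i = t + 1 := by omega
        rw [PhiMap_lt (t := ⟨t, by omega⟩) h2, PhiMap_ge (t := ⟨t + 1, h⟩) h1]
        have hT : (f ⟨t + 1, h⟩).1 < r ∧ (f ⟨t + 1, h⟩).2 ≤ j ∧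
            ((f ⟨t + 1, h⟩).2 = j → (f ⟨t + 1, h⟩).1 = B) := by
          refine ⟨(hf1 _).1, (hf1 _).2, fun h3 => ?_⟩
          rw [← hf4 _ h3, colR_ge a hi2 h1]
        have hsrc : (f ⟨t, by omega⟩).1 = (f ⟨t + 1, h⟩).1 → B < C →
            partLT (f ⟨t, by omega⟩) (f ⟨t + 1, h⟩) := by
          intro hveq hlt'
          refine hf3 t h hveq ?_
          rw [letR_ge a hi2 (t := ⟨t + 1, h⟩) h1, letR_lt a hi2 (t := ⟨t, by omega⟩) h2]
          have e1 : letterOf a ⟨t + 1, h⟩ = ((a.perm ⟨t + 1, h⟩ : ℕ) + 1, B) := rfl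
          rw [e1]
          have hv2 : (a.perm ⟨t + 1, h⟩ : ℕ) < (a.perm ⟨t, by omega⟩ : ℕ) :=
            hdesiff.mp hlt'
          exact shift_same.mpr (by omega)
        exact ((jun2 hC hB (Ne.symm hBC) _ _ (hdmf _ h2) hT).mp ⟨hf2 t h, hsrc⟩).1
      · have h2' : ¬ (t + 1) < i := by omega
        rw [PhiMap_ge (t := ⟨t, by omega⟩) h2, PhiMap_ge (t := ⟨t + 1, h⟩) h2']
        exact hf2 t h
  · intro t h hgeq hlt
    by_cases h1 : t + 1 < i
    · have ht : t < i := by omega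
      rw [PhiMap_lt (t := ⟨t, by omega⟩) ht, PhiMap_lt (t := ⟨t + 1, h⟩) h1]
      rw [PhiMap_lt (t := ⟨t, by omega⟩) ht] at hlt
      have hval : (a.perm ⟨t + 1, h⟩ : ℕ) + 1 < (a.perm ⟨t, by omega⟩ : ℕ) + 1 := by
        rw [letA_lt a hn hconst (t := ⟨t + 1, h⟩) h1, letA_lt a hn hconst (t := ⟨t, by omega⟩) ht] at hlt
        exact shift_same.mp hlt
      have hplt : partLT (f ⟨t, by omega⟩) (f ⟨t + 1, h⟩) := by
        rcases hf2 t h with hcase | hcase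
        · exact Or.inl hcase
        · refine hf3 t h hcase.1 ?_
          rw [letR_lt a hi2 (t := ⟨t + 1, h⟩) h1, letR_lt a hi2 (t := ⟨t, by omega⟩) ht]
          exact shift_same.mpr hval
      exact phi_lt hB hC hBC (hdmf _ ht) (hdmf _ h1) hplt
    · by_cases h2 : t < i
      · obtain rfl : i = t + 1 := by omega
        rw [PhiMap_lt (t := ⟨t, by omega⟩) h2, PhiMap_ge (t := ⟨t + 1, h⟩) h1]
        rw [PhiMap_lt (t := ⟨t, by omega⟩) h2] at hgeq hlt
        rw [PhiMap_ge (t := ⟨t + 1, h⟩) h1] at hgeq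
        have hT : (f ⟨t + 1, h⟩).1 < r ∧ (f ⟨t + 1, h⟩).2 ≤ j ∧
            ((f ⟨t + 1, h⟩).2 = j → (f ⟨t + 1, h⟩).1 = B) := by
          refine ⟨(hf1 _).1, (hf1 _).2, fun h3 => ?_⟩
          rw [← hf4 _ h3, colR_ge a hi2 h1]
        have hsrc : (f ⟨t, by omega⟩).1 = (f ⟨t + 1, h⟩).1 → B < C →
            partLT (f ⟨t, by omega⟩) (f ⟨t + 1, h⟩) := by
          intro hveq hlt'
          refine hf3 t h hveq ?_
          rw [letR_ge a hi2 (t := ⟨t + 1, h⟩) h1, letR_lt a hi2 (t := ⟨t, by omega⟩) h2]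
          have e1 : letterOf a ⟨t + 1, h⟩ = ((a.perm ⟨t + 1, h⟩ : ℕ) + 1, B) := rfl
          rw [e1]
          have hv2 : (a.perm ⟨t + 1, h⟩ : ℕ) < (a.perm ⟨t, by omega⟩ : ℕ) :=
            hdesiff.mp hlt'
          exact shift_same.mpr (by omega)
        have hstr : strictA r C B (phi B C j (f ⟨t, by omega⟩)).1 := by
          have hk : (phi B C j (f ⟨t, by omega⟩)).1 < r :=
            (phi_dom hB hC _ (hdmf _ h2)).1
          rw [letA_lt a hn hconst (t := ⟨t, by omega⟩) h2] at hlt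
          have e1 : letterOf a ⟨t + 1, h⟩ = ((a.perm ⟨t + 1, h⟩ : ℕ) + 1, B) := rfl
          rw [e1] at hlt
          exact (shift_diff hk hB hC hBC).mp hlt
        exact ((jun2 hC hB (Ne.symm hBC) _ _ (hdmf _ h2) hT).mp
          ⟨hf2 t h, hsrc⟩).2 hgeq hstr
      · have h2' : ¬ (t + 1) < i := by omega
        rw [PhiMap_ge (t := ⟨t, by omega⟩) h2, PhiMap_ge (t := ⟨t + 1, h⟩) h2']
        rw [PhiMap_ge (t := ⟨t, by omega⟩) h2] at hgeq hlt
        rw [PhiMap_ge (t := ⟨t + 1, h⟩) h2'] at hgeq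
        refine hf3 t h hgeq ?_
        rw [letR_ge a hi2 (t := ⟨t + 1, h⟩) h2', letR_ge a hi2 (t := ⟨t, by omega⟩) h2]
        exact hlt
  · intro t h2
    by_cases ht : t.1 < i
    · rw [PhiMap_lt ht] at h2 ⊢
      rw [hconst t ht]
      exact ((phi_dom hB hC _ (hdmf t ht)).2.2 h2).symm
    · rw [PhiMap_ge ht] at h2 ⊢
      rw [← colR_ge a hi2 ht]
      exact hf4 t h2

open ColoredPerm in
theorem step2 {r n j i : ℕ} [NeZero r] (a : ColoredPerm r n)
    (hi1 : 1 ≤ i) (hi2 : i < n)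
    (hconst : ∀ s : Fin n, s.1 < i → a.col s = a.col ⟨0, by omega⟩)
    (hbreak : a.col ⟨i, hi2⟩ ≠ a.col ⟨0, by omega⟩)
    (hdesiff : ((a.col ⟨i, hi2⟩).val < (a.col ⟨0, by omega⟩).val ↔
      (a.perm ⟨i, hi2⟩ : ℕ) < (a.perm ⟨i - 1, by omega⟩ : ℕ)))
    (f : Fin n → ℕ × ℕ) (hf : IsPPart r n j a f) :
    IsPPart r n j (rho a i hi2)
      (PhiMap (a.col ⟨0, by omega⟩).val (a.col ⟨i, hi2⟩).val j i f) := by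
  have hn : 0 < n := by omega
  set B := (a.col ⟨i, hi2⟩).val with hBdef
  set C := (a.col ⟨0, hn⟩).val with hCdef
  have hB : B < r := ZMod.val_lt _
  have hC : C < r := ZMod.val_lt _
  have hBC : B ≠ C := fun h => hbreak (ZMod.val_injective _ h)
  obtain ⟨hf1, hf2, hf3, hf4⟩ := hf
  have hdmf : ∀ t : Fin n, t.1 < i → Dm r C j (f t) := by
    intro t ht
    refine ⟨(hf1 t).1, (hf1 t).2, fun h2 => ?_⟩
    rw [← hf4 t h2, hconst t ht]
  refine ⟨?_, ?_, ?_, ?_⟩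
  · intro t
    by_cases ht : t.1 < i
    · rw [PhiMap_lt ht]
      exact ⟨(phi_dom hC hB _ (hdmf t ht)).1, (phi_dom hC hB _ (hdmf t ht)).2.1⟩
    · rw [PhiMap_ge ht]
      exact hf1 t
  · intro t h
    by_cases h1 : t + 1 < i
    · have ht : t < i := by omega
      rw [PhiMap_lt (t := ⟨t, by omega⟩) ht, PhiMap_lt (t := ⟨t + 1, h⟩) h1]
      exact phi_le hC hB (Ne.symm hBC) (hdmf _ ht) (hdmf _ h1) (hf2 t h)
    · by_cases h2 : t < i
      · obtain rfl : i = t + 1 := by omega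
        rw [PhiMap_lt (t := ⟨t, by omega⟩) h2, PhiMap_ge (t := ⟨t + 1, h⟩) h1]
        have hT : (f ⟨t + 1, h⟩).1 < r ∧ (f ⟨t + 1, h⟩).2 ≤ j ∧
            ((f ⟨t + 1, h⟩).2 = j → (f ⟨t + 1, h⟩).1 = B) := by
          refine ⟨(hf1 _).1, (hf1 _).2, fun h3 => ?_⟩
          rw [← hf4 _ h3]
        have hsrc : (f ⟨t, by omega⟩).1 = (f ⟨t + 1, h⟩).1 →
            strictA r C B (f ⟨t, by omega⟩).1 →
            partLT (f ⟨t, by omega⟩) (f ⟨t + 1, h⟩) := by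
          intro hveq hstrict
          refine hf3 t h hveq ?_
          rw [letA_lt a hn hconst (t := ⟨t, by omega⟩) h2]
          have e1 : letterOf a ⟨t + 1, h⟩ = ((a.perm ⟨t + 1, h⟩ : ℕ) + 1, B) := rfl
          rw [e1]
          have hk : (f ⟨t, by omega⟩).1 < r := (hdmf _ h2).1
          exact (shift_diff hk hB hC hBC).mpr hstrict
        exact ((jun1 hC hB (Ne.symm hBC) _ _ (hdmf _ h2) hT).mp ⟨hf2 t h, hsrc⟩).1
      · have h2' : ¬ (t + 1) < i := by omega
        rw [PhiMap_ge (t := ⟨t, by omega⟩) h2, PhiMap_ge (t := ⟨t + 1, h⟩) h2']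
        exact hf2 t h
  · intro t h hgeq hlt
    by_cases h1 : t + 1 < i
    · have ht : t < i := by omega
      rw [PhiMap_lt (t := ⟨t, by omega⟩) ht, PhiMap_lt (t := ⟨t + 1, h⟩) h1]
      rw [PhiMap_lt (t := ⟨t, by omega⟩) ht] at hlt
      have hval : (a.perm ⟨t + 1, h⟩ : ℕ) + 1 < (a.perm ⟨t, by omega⟩ : ℕ) + 1 := by
        rw [letR_lt a hi2 (t := ⟨t + 1, h⟩) h1, letR_lt a hi2 (t := ⟨t, by omega⟩) ht]
          at hlt
        exact shift_same.mp hlt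
      have hplt : partLT (f ⟨t, by omega⟩) (f ⟨t + 1, h⟩) := by
        rcases hf2 t h with hcase | hcase
        · exact Or.inl hcase
        · refine hf3 t h hcase.1 ?_
          rw [letA_lt a hn hconst (t := ⟨t + 1, h⟩) h1,
            letA_lt a hn hconst (t := ⟨t, by omega⟩) ht]
          exact shift_same.mpr hval
      exact phi_lt hC hB (Ne.symm hBC) (hdmf _ ht) (hdmf _ h1) hplt
    · by_cases h2 : t < i
      · obtain rfl : i = t + 1 := by omega
        rw [PhiMap_lt (t := ⟨t, by omega⟩) h2, PhiMap_ge (t := ⟨t + 1, h⟩) h1]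
        rw [PhiMap_lt (t := ⟨t, by omega⟩) h2] at hgeq hlt
        rw [PhiMap_ge (t := ⟨t + 1, h⟩) h1] at hgeq
        have hT : (f ⟨t + 1, h⟩).1 < r ∧ (f ⟨t + 1, h⟩).2 ≤ j ∧
            ((f ⟨t + 1, h⟩).2 = j → (f ⟨t + 1, h⟩).1 = B) := by
          refine ⟨(hf1 _).1, (hf1 _).2, fun h3 => ?_⟩
          rw [← hf4 _ h3]
        have hsrc : (f ⟨t, by omega⟩).1 = (f ⟨t + 1, h⟩).1 →
            strictA r C B (f ⟨t, by omega⟩).1 →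
            partLT (f ⟨t, by omega⟩) (f ⟨t + 1, h⟩) := by
          intro hveq hstrict
          refine hf3 t h hveq ?_
          rw [letA_lt a hn hconst (t := ⟨t, by omega⟩) h2]
          have e1 : letterOf a ⟨t + 1, h⟩ = ((a.perm ⟨t + 1, h⟩ : ℕ) + 1, B) := rfl
          rw [e1]
          have hk : (f ⟨t, by omega⟩).1 < r := (hdmf _ h2).1
          exact (shift_diff hk hB hC hBC).mpr hstrict
        have hlt' : B < C := by
          rw [letR_ge a hi2 (t := ⟨t + 1, h⟩) h1,
            letR_lt a hi2 (t := ⟨t, by omega⟩) h2] at hlt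
          have e1 : letterOf a ⟨t + 1, h⟩ = ((a.perm ⟨t + 1, h⟩ : ℕ) + 1, B) := rfl
          rw [e1] at hlt
          have hval := shift_same.mp hlt
          have hv2 : (a.perm ⟨t + 1, hi2⟩ : ℕ) < (a.perm ⟨t + 1 - 1, by omega⟩ : ℕ) := by
            have hv3 : (a.perm ⟨t + 1, h⟩ : ℕ) < (a.perm ⟨t, by omega⟩ : ℕ) := by omega
            exact hv3
          exact hdesiff.mpr hv2
        exact ((jun1 hC hB (Ne.symm hBC) _ _ (hdmf _ h2) hT).mp
          ⟨hf2 t h, hsrc⟩).2 hgeq hlt'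
      · have h2' : ¬ (t + 1) < i := by omega
        rw [PhiMap_ge (t := ⟨t, by omega⟩) h2, PhiMap_ge (t := ⟨t + 1, h⟩) h2']
        rw [PhiMap_ge (t := ⟨t, by omega⟩) h2] at hgeq hlt
        rw [PhiMap_ge (t := ⟨t + 1, h⟩) h2'] at hgeq
        refine hf3 t h hgeq ?_
        rw [letR_ge a hi2 (t := ⟨t + 1, h⟩) h2', letR_ge a hi2 (t := ⟨t, by omega⟩) h2]
          at hlt
        exact hlt
  · intro t h2
    by_cases ht : t.1 < i
    · rw [PhiMap_lt ht] at h2 ⊢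
      rw [colR_lt a hi2 ht]
      exact ((phi_dom hC hB _ (hdmf t ht)).2.2 h2).symm
    · rw [PhiMap_ge ht] at h2 ⊢
      rw [colR_ge a hi2 ht]
      exact hf4 t h2
open ColoredPerm in
/-- If `π` is non-monochromatic with initial monochromatic run of length `i`, and
recoloring that run to the color of the next letter preserves the number of
descents, then `Ω_{P(π)}(j) = Ω_{P(ρ(π))}(j)`. -/
theorem omegaP_rho (r n : ℕ) [NeZero r] (hn : 1 ≤ n)
    (a : ColoredPerm r n) (i : ℕ) (hi1 : 1 ≤ i) (hi2 : i < n)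
    (hconst : ∀ s : Fin n, s.1 < i → a.col s = a.col ⟨0, by omega⟩)
    (hbreak : a.col ⟨i, hi2⟩ ≠ a.col ⟨0, by omega⟩)
    (hdes : des (rho a i hi2) = des a) (j : ℕ) :
    OmegaP r n j (rho a i hi2) = OmegaP r n j a := by
  have hn0 : 0 < n := by omega
  have hB : (a.col ⟨i, hi2⟩).val < r := ZMod.val_lt _
  have hC : (a.col ⟨0, hn0⟩).val < r := ZMod.val_lt _
  have hBC : (a.col ⟨i, hi2⟩).val ≠ (a.col ⟨0, hn0⟩).val := fun h => hbreak (ZMod.val_injective _ h)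
  -- letterAt computations
  have hAt : ∀ m : ℕ, i ≤ m → letterAt (rho a i hi2) m = letterAt a m := by
    intro m hm
    unfold letterAt
    by_cases h : m < n
    · rw [dif_pos h, dif_pos h,
        colR_ge a hi2 (t := ⟨m, h⟩) (show ¬ m < i by omega)]
      rfl
    · rw [dif_neg h, dif_neg h]
  have hAtR : ∀ (m : ℕ) (hm : m < n), m < i →
      letterAt (rho a i hi2) m = ((a.perm ⟨m, hm⟩ : ℕ) + 1, (a.col ⟨i, hi2⟩).val) := by
    intro m hm h
    unfold letterAt
    rw [dif_pos hm, colR_lt a hi2 (t := ⟨m, hm⟩) h]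
    rfl
  have hAtA : ∀ (m : ℕ) (hm : m < n), m < i →
      letterAt a m = ((a.perm ⟨m, hm⟩ : ℕ) + 1, (a.col ⟨0, hn0⟩).val) := by
    intro m hm h
    unfold letterAt
    rw [dif_pos hm, hconst ⟨m, hm⟩ h]
  have eAi : letterAt a i = ((a.perm ⟨i, hi2⟩ : ℕ) + 1, (a.col ⟨i, hi2⟩).val) := by
    unfold letterAt
    rw [dif_pos hi2]
  -- descent sets agree away from i-1
  have hsame : ∀ t : Fin n, t.1 ≠ i - 1 →
      (t ∈ Des (rho a i hi2) ↔ t ∈ Des a) := by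
    intro t ht
    simp only [Des, Finset.mem_filter, Finset.mem_univ, true_and]
    by_cases h1 : t.1 + 1 < i
    · have p1 : t.1 + 1 < n := by omega
      have p0 : t.1 < n := by omega
      rw [hAtR (t.1 + 1) p1 h1, hAtR t.1 p0 (by omega),
        hAtA (t.1 + 1) p1 h1, hAtA t.1 p0 (by omega)]
      simp only [letterLT, lt_self_iff_false, false_or, true_and]
    · have h2 : i ≤ t.1 := by omega
      rw [hAt (t.1 + 1) (by omega), hAt t.1 h2]
  have herase : (Des (rho a i hi2)).erase ⟨i - 1, by omega⟩ =
      (Des a).erase ⟨i - 1, by omega⟩ := by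
    ext t
    simp only [Finset.mem_erase]
    refine and_congr_right fun ht => hsame t fun hv => ht (Fin.ext hv)
  have hcard : des (rho a i hi2) = des a := hdes
  unfold des at hcard
  have hdmem : ((⟨i - 1, by omega⟩ : Fin n) ∈ Des (rho a i hi2)) ↔
      ((⟨i - 1, by omega⟩ : Fin n) ∈ Des a) := by
    by_cases hA : (⟨i - 1, by omega⟩ : Fin n) ∈ Des (rho a i hi2) <;>
      by_cases hB2 : (⟨i - 1, by omega⟩ : Fin n) ∈ Des a
    · simp [hA, hB2]
    · exfalso
      have c1 := Finset.card_erase_add_one hA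
      have c2 : ((Des a).erase ⟨i - 1, by omega⟩).card = (Des a).card := by
        rw [Finset.erase_eq_of_notMem hB2]
      rw [herase] at c1
      omega
    · exfalso
      have c1 := Finset.card_erase_add_one hB2
      have c2 : ((Des (rho a i hi2)).erase ⟨i - 1, by omega⟩).card =
          (Des (rho a i hi2)).card := by
        rw [Finset.erase_eq_of_notMem hA]
      rw [herase] at c2
      omega
    · simp [hA, hB2]
  have pm : i - 1 < n := by omega
  have e1 : i - 1 + 1 = i := by omega
  have mR : ((⟨i - 1, pm⟩ : Fin n) ∈ Des (rho a i hi2)) ↔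
      ((a.perm ⟨i, hi2⟩ : ℕ) + 1 < (a.perm ⟨i - 1, pm⟩ : ℕ) + 1) := by
    simp only [Des, Finset.mem_filter, Finset.mem_univ, true_and]
    show letterLT (letterAt (rho a i hi2) (i - 1 + 1))
      (letterAt (rho a i hi2) (i - 1)) ↔ _
    rw [e1, hAt i le_rfl, eAi, hAtR (i - 1) pm (by omega)]
    simp only [letterLT, lt_self_iff_false, false_or, true_and]
  have mA : ((⟨i - 1, pm⟩ : Fin n) ∈ Des a) ↔ (a.col ⟨i, hi2⟩).val < (a.col ⟨0, hn0⟩).val := by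
    simp only [Des, Finset.mem_filter, Finset.mem_univ, true_and]
    show letterLT (letterAt a (i - 1 + 1)) (letterAt a (i - 1)) ↔ _
    rw [e1, eAi, hAtA (i - 1) pm (by omega)]
    simp only [letterLT, lt_self_iff_false, false_or, true_and]
    omega
  have hdesiff : ((a.col ⟨i, hi2⟩).val < (a.col ⟨0, hn0⟩).val ↔ (a.perm ⟨i, hi2⟩ : ℕ) < (a.perm ⟨i - 1, pm⟩ : ℕ)) := by
    have h1 := mR.symm.trans (hdmem.trans mA)
    omega
  -- the bijection
  have dmR : ∀ (f : Fin n → ℕ × ℕ), IsPPart r n j (rho a i hi2) f →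
      ∀ t : Fin n, t.1 < i → Dm r (a.col ⟨i, hi2⟩).val j (f t) := by
    intro f hf t ht
    obtain ⟨hf1, -, -, hf4⟩ := hf
    refine ⟨(hf1 t).1, (hf1 t).2, fun h2 => ?_⟩
    rw [← hf4 t h2, colR_lt a hi2 ht]
  have dmA : ∀ (f : Fin n → ℕ × ℕ), IsPPart r n j a f →
      ∀ t : Fin n, t.1 < i → Dm r (a.col ⟨0, hn0⟩).val j (f t) := by
    intro f hf t ht
    obtain ⟨hf1, -, -, hf4⟩ := hf
    refine ⟨(hf1 t).1, (hf1 t).2, fun h2 => ?_⟩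
    rw [← hf4 t h2, hconst t ht]
  unfold OmegaP
  refine Nat.card_congr
    ⟨fun x => ⟨PhiMap (a.col ⟨i, hi2⟩).val (a.col ⟨0, hn0⟩).val j i x.1, step1 a hi1 hi2 hconst hbreak hdesiff x.1 x.2⟩,
     fun x => ⟨PhiMap (a.col ⟨0, hn0⟩).val (a.col ⟨i, hi2⟩).val j i x.1, step2 a hi1 hi2 hconst hbreak hdesiff x.1 x.2⟩,
     ?_, ?_⟩
  · intro x
    apply Subtype.ext
    funext t
    show PhiMap (a.col ⟨0, hn0⟩).val (a.col ⟨i, hi2⟩).val j i (PhiMap (a.col ⟨i, hi2⟩).val (a.col ⟨0, hn0⟩).val j i x.1) t = x.1 t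
    by_cases ht : t.1 < i
    · rw [PhiMap_lt ht, PhiMap_lt ht]
      exact phi_inv hB hC hBC _ (dmR x.1 x.2 t ht)
    · rw [PhiMap_ge ht, PhiMap_ge ht]
  · intro x
    apply Subtype.ext
    funext t
    show PhiMap (a.col ⟨i, hi2⟩).val (a.col ⟨0, hn0⟩).val j i (PhiMap (a.col ⟨0, hn0⟩).val (a.col ⟨i, hi2⟩).val j i x.1) t = x.1 t
    by_cases ht : t.1 < i
    · rw [PhiMap_lt ht, PhiMap_lt ht]
      exact phi_inv hC hB (Ne.symm hBC) _ (dmA x.1 x.2 t ht)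
    · rw [PhiMap_ge ht, PhiMap_ge ht]
end

section
/- For every π = (σ, c) ∈ G_{r,n} and every integer j ≥ 0, Ω_{P(π)}(j) = binomial(r·j + n − intdes(π), n). -/
open scoped BigOperators

namespace OmegaAux

def phi (j c : ℕ) (x : ℕ × ℕ) : ℕ := x.1 * j + x.2 + (if c < x.1 then 1 else 0)

def psi (j c m : ℕ) : ℕ × ℕ :=
  if m < c * j + j then (m / j, m % j)
  else if m = c * j + j then (c, j)
  else ((m - 1) / j, (m - 1) % j)

def Allowed (r j c : ℕ) (x : ℕ × ℕ) : Prop := x.1 < r ∧ x.2 ≤ j ∧ (x.2 = j → c = x.1)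

lemma succ_mul_le {c r j : ℕ} (h : c < r) : c * j + j ≤ r * j := by
  calc c * j + j = (c + 1) * j := by ring
  _ ≤ r * j := Nat.mul_le_mul_right _ (by omega)

lemma phi_le {r j c : ℕ} {x : ℕ × ℕ} (hx : Allowed r j c x) :
    phi j c x ≤ r * j := by
  obtain ⟨h1, h2, h3⟩ := hx
  have hkj := succ_mul_le (j := j) h1
  unfold phi
  split_ifs with h
  · have : x.2 < j := by
      rcases Nat.lt_or_ge x.2 j with h' | h'
      · exact h'
      · exact absurd (h3 (le_antisymm h2 h')) (by omega)
    omega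
  · omega

lemma div_lt_succ {j m c : ℕ} (hj : 0 < j) (h : m < c * j + j) : m / j < c + 1 :=
  (Nat.div_lt_iff_lt_mul hj).mpr (by calc m < c * j + j := h
                                    _ = (c + 1) * j := by ring)

lemma psi_allowed {r j c m : ℕ} (hc : c < r) (hm : m ≤ r * j) :
    Allowed r j c (psi j c m) := by
  unfold psi
  split_ifs with h1 h2
  · have hj : 0 < j := by by_contra h; push_neg at h
                          interval_cases j <;> omega
    have hd := div_lt_succ hj h1
    have hmod : m % j < j := Nat.mod_lt _ hj
    exact ⟨by omega, by omega, by omega⟩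
  · exact ⟨hc, le_rfl, fun _ => rfl⟩
  · have hj : 0 < j := by by_contra h; push_neg at h
                          interval_cases j <;> omega
    have hd : (m - 1) / j < r :=
      (Nat.div_lt_iff_lt_mul hj).mpr (by omega)
    have hmod : (m - 1) % j < j := Nat.mod_lt _ hj
    exact ⟨hd, by omega, by omega⟩

lemma divmod_eq {j k u : ℕ} (hj : 0 < j) (hu : u < j) :
    (k * j + u) / j = k ∧ (k * j + u) % j = u := by
  rw [mul_comm k j, Nat.mul_add_div hj, Nat.mul_add_mod,
    Nat.div_eq_of_lt hu, Nat.mod_eq_of_lt hu]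
  omega

lemma psi_phi {r j c : ℕ} {x : ℕ × ℕ} (hx : Allowed r j c x) :
    psi j c (phi j c x) = x := by
  obtain ⟨h1, h2, h3⟩ := hx
  obtain ⟨k, u⟩ := x
  simp only at h1 h2 h3
  rcases eq_or_lt_of_le h2 with hu | hu
  · have hk : c = k := h3 hu
    subst hk
    subst hu
    unfold phi psi
    simp only
    rw [if_neg (lt_irrefl c), if_neg (by omega), if_pos (by omega)]
  · have hj : 0 < j := by omega
    unfold phi psi
    simp only
    by_cases hck : c < k
    · rw [if_pos hck]
      have hck' : c * j + j ≤ k * j := succ_mul_le hck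
      rw [if_neg (by omega), if_neg (by omega)]
      have hsub : k * j + u + 1 - 1 = k * j + u := by omega
      rw [hsub, (divmod_eq hj hu).1, (divmod_eq hj hu).2]
    · rw [if_neg hck]
      have hck' : k * j + j ≤ c * j + j := by
        have : k * j ≤ c * j := Nat.mul_le_mul_right _ (by omega)
        omega
      rw [if_pos (by omega)]
      have : k * j + u + 0 = k * j + u := by omega
      rw [this, (divmod_eq hj hu).1, (divmod_eq hj hu).2]

lemma phi_psi {r j c m : ℕ} (hc : c < r) (hm : m ≤ r * j) :
    phi j c (psi j c m) = m := by
  unfold psi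
  split_ifs with h1 h2
  · have hj : 0 < j := by by_contra h; push_neg at h
                          interval_cases j <;> omega
    have hd := div_lt_succ hj h1
    have hdm : m / j * j + m % j = m := Nat.div_add_mod' m j
    unfold phi
    simp only
    rw [if_neg (by omega)]
    omega
  · unfold phi
    simp only
    rw [if_neg (by omega)]
    omega
  · have hj : 0 < j := by by_contra h; push_neg at h
                          interval_cases j <;> omega
    have hd : c + 1 ≤ (m - 1) / j := by
      rw [Nat.le_div_iff_mul_le hj]
      calc (c + 1) * j = c * j + j := by ring
      _ ≤ m - 1 := by omega
    have hdm : (m - 1) / j * j + (m - 1) % j = m - 1 := Nat.div_add_mod' (m - 1) j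
    unfold phi
    simp only
    rw [if_pos (by omega)]
    omega

lemma shift_color {r c k : ℕ} (hc : c < r) (hk : k < r) :
    (c + r - k % r) % r = if k ≤ c then c - k else c + r - k := by
  rw [Nat.mod_eq_of_lt hk]
  split_ifs with h
  · have h2 : c + r - k = (c - k) + r := by omega
    rw [h2, Nat.add_mod_right, Nat.mod_eq_of_lt (by omega)]
  · rw [Nat.mod_eq_of_lt (by omega)]

lemma local_iff {r j : ℕ} (L0 L1 x y : ℕ × ℕ)
    (hc0 : L0.2 < r) (hc1 : L1.2 < r)
    (hx : Allowed r j L0.2 x) (hy : Allowed r j L1.2 y) :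
    (partLE x y ∧ (x.1 = y.1 →
        letterLT (shiftLetter r x.1 L1) (shiftLetter r x.1 L0) → partLT x y))
    ↔ phi j L0.2 x + (if letterLT L1 L0 then 1 else 0) ≤ phi j L1.2 y := by
  obtain ⟨v0, c0⟩ := L0
  obtain ⟨v1, c1⟩ := L1
  obtain ⟨k0, u0⟩ := x
  obtain ⟨k1, u1⟩ := y
  obtain ⟨hxr, hxj, hxb⟩ := hx
  obtain ⟨hyr, hyj, hyb⟩ := hy
  simp only at hc0 hc1 hxr hxj hxb hyr hyj hyb
  have hxb' : u0 ≠ j ∨ c0 = k0 := by tauto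
  have hyb' : u1 ≠ j ∨ c1 = k1 := by tauto
  simp only [partLE, partLT, letterLT, shiftLetter, phi]
  rw [shift_color hc1 hxr, shift_color hc0 hxr]
  rcases lt_trichotomy k0 k1 with hk | hk | hk
  · have hm0 : k0 * j + j ≤ k1 * j := succ_mul_le hk
    split_ifs <;> grind
  · subst hk
    split_ifs <;> grind
  · have hm1 : k1 * j + j ≤ k0 * j := succ_mul_le hk
    split_ifs <;> grind

end OmegaAux

section AUXDEV
namespace OmegaAux

variable {r n : ℕ}

/-! ### Descent indicator and partial sums -/

def epsN (a : ColoredPerm r n) (i : ℕ) : ℕ :=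
  if letterLT (ColoredPerm.letterAt a (i + 1)) (ColoredPerm.letterAt a i) then 1 else 0

def S (a : ColoredPerm r n) (i : ℕ) : ℕ := ∑ t ∈ Finset.range i, epsN a t

lemma epsN_le (a : ColoredPerm r n) (i : ℕ) : epsN a i ≤ 1 := by
  unfold epsN; split <;> omega

lemma S_le (a : ColoredPerm r n) (i : ℕ) : S a i ≤ i := by
  calc S a i ≤ ∑ _t ∈ Finset.range i, 1 :=
        Finset.sum_le_sum fun t _ => epsN_le a t
  _ = i := by simp

lemma S_succ (a : ColoredPerm r n) (i : ℕ) : S a (i + 1) = S a i + epsN a i :=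
  Finset.sum_range_succ _ _

lemma S_mono (a : ColoredPerm r n) {i i' : ℕ} (h : i ≤ i') : S a i ≤ S a i' :=
  Finset.sum_le_sum_of_subset (Finset.range_subset_range.mpr h)

lemma S_add_le (a : ColoredPerm r n) (i k : ℕ) : S a (i + k) ≤ S a i + k := by
  induction k with
  | zero => simp
  | succ k ih =>
    rw [show i + (k + 1) = (i + k) + 1 from rfl, S_succ]
    have := epsN_le a (i + k)
    omega

lemma letterAt_eq (a : ColoredPerm r n) {i : ℕ} (h : i < n) :
    ColoredPerm.letterAt a i = letterOf a ⟨i, h⟩ := by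
  unfold ColoredPerm.letterAt letterOf
  rw [dif_pos h]

lemma epsN_eq (a : ColoredPerm r n) {i : ℕ} (h : i + 1 < n) :
    epsN a i =
      if letterLT (letterOf a ⟨i + 1, h⟩) (letterOf a ⟨i, Nat.lt_of_succ_lt h⟩)
      then 1 else 0 := by
  unfold epsN
  rw [letterAt_eq a (Nat.lt_of_succ_lt h), letterAt_eq a h]

lemma intdes_eq (hn : 1 ≤ n) (a : ColoredPerm r n) :
    ColoredPerm.intdes a = S a (n - 1) := by
  obtain ⟨m, rfl⟩ : ∃ m, n = m + 1 := ⟨n - 1, by omega⟩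
  unfold ColoredPerm.intdes ColoredPerm.Des
  rw [Finset.filter_filter, Finset.card_filter]
  rw [Fin.sum_univ_eq_sum_range
    (fun i => if letterLT (ColoredPerm.letterAt a (i + 1)) (ColoredPerm.letterAt a i)
        ∧ i + 1 < m + 1 then 1 else 0) (m + 1)]
  rw [Finset.sum_range_succ]
  simp only [Nat.add_sub_cancel, lt_irrefl, and_false, if_false, add_zero]
  unfold S epsN
  refine Finset.sum_congr rfl fun i hi => ?_
  rw [Finset.mem_range] at hi
  simp [hi]

end OmegaAux
end AUXDEV
section AUXDEV2
namespace OmegaAux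

variable {r n : ℕ}

lemma chain_add_le {h : Fin n → ℕ}
    (H : ∀ (i : ℕ) (hi : i + 1 < n), h ⟨i, Nat.lt_of_succ_lt hi⟩ + 1 ≤ h ⟨i + 1, hi⟩) :
    ∀ (k i : ℕ) (hi : i < n) (hik : i + k < n), h ⟨i, hi⟩ + k ≤ h ⟨i + k, hik⟩ := by
  intro k
  induction k with
  | zero => intro i hi hik; exact le_of_eq rfl
  | succ k ih =>
    intro i hi hik
    have hik' : i + k < n := by omega
    have h1 := ih i hi hik'
    have h2 := H (i + k) hik
    have he : h ⟨i + k, Nat.lt_of_succ_lt hik⟩ = h ⟨i + k, hik'⟩ := rfl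
    rw [he] at h2
    show h ⟨i, hi⟩ + (k + 1) ≤ h ⟨i + k + 1, hik⟩
    omega

lemma strictMono_of_chain {h : Fin n → ℕ}
    (H : ∀ (i : ℕ) (hi : i + 1 < n), h ⟨i, Nat.lt_of_succ_lt hi⟩ + 1 ≤ h ⟨i + 1, hi⟩) :
    StrictMono h := by
  intro x y hxy
  obtain ⟨x, hx⟩ := x
  obtain ⟨y, hy⟩ := y
  have hxy' : x < y := hxy
  have hp : x + (y - x) < n := by omega
  have h1 := chain_add_le H (y - x) x hx hp
  have he : (⟨x + (y - x), hp⟩ : Fin n) = ⟨y, hy⟩ := Fin.ext (show x + (y - x) = y by omega)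
  rw [he] at h1
  show h ⟨x, hx⟩ < h ⟨y, hy⟩
  omega

lemma chain_of_strictMono {h : Fin n → ℕ} (hsm : StrictMono h) :
    ∀ (i : ℕ) (hi : i + 1 < n), h ⟨i, Nat.lt_of_succ_lt hi⟩ + 1 ≤ h ⟨i + 1, hi⟩ :=
  fun i hi => hsm (show (⟨i, Nat.lt_of_succ_lt hi⟩ : Fin n) < ⟨i + 1, hi⟩ from Nat.lt_succ_self i)

lemma ge_index {h : Fin n → ℕ} (hsm : StrictMono h) (i : ℕ) (hi : i < n) :
    i ≤ h ⟨i, hi⟩ := by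
  have hz : 0 < n := by omega
  have hp : 0 + i < n := by omega
  have h1 := chain_add_le (chain_of_strictMono hsm) i 0 hz hp
  have he : (⟨0 + i, hp⟩ : Fin n) = ⟨i, hi⟩ := Fin.ext (show 0 + i = i by omega)
  rw [he] at h1
  omega

end OmegaAux
end AUXDEV2
section AUXDEV3
namespace OmegaAux

variable {r n : ℕ} [NeZero r]

lemma col_lt (a : ColoredPerm r n) (i : Fin n) : (letterOf a i).2 < r := ZMod.val_lt _

def Gap (a : ColoredPerm r n) (j : ℕ) (g : Fin n → ℕ) : Prop :=
  (∀ i, g i ≤ r * j) ∧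
  ∀ (i : ℕ) (h : i + 1 < n),
    g ⟨i, Nat.lt_of_succ_lt h⟩ + epsN a i ≤ g ⟨i + 1, h⟩

def E1 (a : ColoredPerm r n) (j : ℕ) :
    {f : Fin n → ℕ × ℕ // IsPPart r n j a f} ≃ {g : Fin n → ℕ // Gap a j g} where
  toFun f := ⟨fun i => phi j (a.col i).val (f.1 i), by
    obtain ⟨f, hf⟩ := f
    obtain ⟨h1, h2, h3, h4⟩ := hf
    have hall : ∀ i, Allowed r j (a.col i).val (f i) :=
      fun i => ⟨(h1 i).1, (h1 i).2, h4 i⟩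
    refine ⟨fun i => phi_le (hall i), fun i hi => ?_⟩
    show phi j (a.col ⟨i, Nat.lt_of_succ_lt hi⟩).val (f ⟨i, Nat.lt_of_succ_lt hi⟩) + epsN a i
      ≤ phi j (a.col ⟨i + 1, hi⟩).val (f ⟨i + 1, hi⟩)
    rw [epsN_eq a hi]
    exact (local_iff (letterOf a ⟨i, Nat.lt_of_succ_lt hi⟩) (letterOf a ⟨i + 1, hi⟩)
      (f ⟨i, Nat.lt_of_succ_lt hi⟩) (f ⟨i + 1, hi⟩)
      (col_lt a _) (col_lt a _) (hall _) (hall _)).mp ⟨h2 i hi, h3 i hi⟩⟩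
  invFun g := ⟨fun i => psi j (a.col i).val (g.1 i), by
    obtain ⟨g, hb, hgap⟩ := g
    have hall : ∀ i, Allowed r j (a.col i).val (psi j (a.col i).val (g i)) :=
      fun i => psi_allowed (ZMod.val_lt _) (hb i)
    have hloc : ∀ (i : ℕ) (hi : i + 1 < n),
        partLE (psi j (a.col ⟨i, Nat.lt_of_succ_lt hi⟩).val (g ⟨i, Nat.lt_of_succ_lt hi⟩))
          (psi j (a.col ⟨i + 1, hi⟩).val (g ⟨i + 1, hi⟩)) ∧
        ((psi j (a.col ⟨i, Nat.lt_of_succ_lt hi⟩).val (g ⟨i, Nat.lt_of_succ_lt hi⟩)).1 =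
            (psi j (a.col ⟨i + 1, hi⟩).val (g ⟨i + 1, hi⟩)).1 →
          letterLT
            (shiftLetter r (psi j (a.col ⟨i, Nat.lt_of_succ_lt hi⟩).val
              (g ⟨i, Nat.lt_of_succ_lt hi⟩)).1 (letterOf a ⟨i + 1, hi⟩))
            (shiftLetter r (psi j (a.col ⟨i, Nat.lt_of_succ_lt hi⟩).val
              (g ⟨i, Nat.lt_of_succ_lt hi⟩)).1 (letterOf a ⟨i, Nat.lt_of_succ_lt hi⟩)) →
          partLT (psi j (a.col ⟨i, Nat.lt_of_succ_lt hi⟩).val (g ⟨i, Nat.lt_of_succ_lt hi⟩))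
            (psi j (a.col ⟨i + 1, hi⟩).val (g ⟨i + 1, hi⟩))) := by
      intro i hi
      refine (local_iff (letterOf a ⟨i, Nat.lt_of_succ_lt hi⟩) (letterOf a ⟨i + 1, hi⟩)
        _ _ (col_lt a _) (col_lt a _) (hall _) (hall _)).mpr ?_
      show phi j (a.col ⟨i, Nat.lt_of_succ_lt hi⟩).val
          (psi j (a.col ⟨i, Nat.lt_of_succ_lt hi⟩).val (g ⟨i, Nat.lt_of_succ_lt hi⟩)) + _
        ≤ phi j (a.col ⟨i + 1, hi⟩).val
          (psi j (a.col ⟨i + 1, hi⟩).val (g ⟨i + 1, hi⟩))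
      rw [phi_psi (ZMod.val_lt _) (hb _), phi_psi (ZMod.val_lt _) (hb _), ← epsN_eq a hi]
      exact hgap i hi
    exact ⟨fun i => ⟨(hall i).1, (hall i).2.1⟩,
      fun i hi => (hloc i hi).1, fun i hi => (hloc i hi).2,
      fun i => (hall i).2.2⟩⟩
  left_inv f := Subtype.ext (funext fun i =>
    psi_phi ⟨(f.2.1 i).1, (f.2.1 i).2, f.2.2.2.2 i⟩)
  right_inv g := Subtype.ext (funext fun i => phi_psi (ZMod.val_lt _) (g.2.1 i))

end OmegaAux
end AUXDEV3
section AUXDEV4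
namespace OmegaAux

variable {r n : ℕ} [NeZero r]

def E2 (hn : 1 ≤ n) (a : ColoredPerm r n) (j : ℕ) :
    {g : Fin n → ℕ // Gap a j g} ≃
    {h : Fin n → ℕ // StrictMono h ∧ ∀ i, h i < r * j + n - ColoredPerm.intdes a} where
  toFun g := ⟨fun i => g.1 i + (i.1 - S a i.1), by
    obtain ⟨g, hb, hgap⟩ := g
    constructor
    · apply strictMono_of_chain
      intro i hi
      have h1 := hgap i hi
      have h2 := S_succ a i
      have h3 := epsN_le a i
      have h4 := S_le a i
      show g ⟨i, Nat.lt_of_succ_lt hi⟩ + (i - S a i) + 1 ≤ g ⟨i + 1, hi⟩ + ((i + 1) - S a (i + 1))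
      omega
    · intro i
      obtain ⟨i, hi⟩ := i
      have h4 := S_le a i
      have hkey := S_add_le a i (n - 1 - i)
      have he : i + (n - 1 - i) = n - 1 := by omega
      rw [he] at hkey
      have hd := intdes_eq hn a
      have hb' := hb ⟨i, hi⟩
      show g ⟨i, hi⟩ + (i - S a i) < r * j + n - ColoredPerm.intdes a
      omega⟩
  invFun h := ⟨fun i => h.1 i - (i.1 - S a i.1), by
    obtain ⟨h, hsm, hbd⟩ := h
    have hch := chain_of_strictMono hsm
    constructor
    · intro i
      obtain ⟨i, hi⟩ := i
      have hn1 : n - 1 < n := by omega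
      have hp : i + (n - 1 - i) < n := by omega
      have h1 := chain_add_le hch (n - 1 - i) i hi hp
      have he : (⟨i + (n - 1 - i), hp⟩ : Fin n) = ⟨n - 1, hn1⟩ :=
        Fin.ext (show i + (n - 1 - i) = n - 1 by omega)
      rw [he] at h1
      have hbl := hbd ⟨n - 1, hn1⟩
      have hge' := ge_index hsm i hi
      have h4 := S_le a i
      have hSm := S_mono a (show i ≤ n - 1 by omega)
      have hd := intdes_eq hn a
      have hSd := S_le a (n - 1)
      show h ⟨i, hi⟩ - (i - S a i) ≤ r * j
      omega
    · intro i hi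
      have h1 := hch i hi
      have hge1 := ge_index hsm i (Nat.lt_of_succ_lt hi)
      have h2 := S_succ a i
      have h3 := epsN_le a i
      have h4 := S_le a i
      show h ⟨i, Nat.lt_of_succ_lt hi⟩ - (i - S a i) + epsN a i
        ≤ h ⟨i + 1, hi⟩ - ((i + 1) - S a (i + 1))
      omega⟩
  left_inv g := Subtype.ext (funext fun i => by
    show g.1 i + (i.1 - S a i.1) - (i.1 - S a i.1) = g.1 i
    omega)
  right_inv h := Subtype.ext (funext fun i => by
    obtain ⟨hf, hsm, hbd⟩ := h
    obtain ⟨i, hi⟩ := i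
    have hge1 := ge_index hsm i hi
    have h4 := S_le a i
    show hf ⟨i, hi⟩ - (i - S a i) + (i - S a i) = hf ⟨i, hi⟩
    omega)

def E3 (a : ColoredPerm r n) (j : ℕ) :
    {h : Fin n → ℕ // StrictMono h ∧ ∀ i, h i < r * j + n - ColoredPerm.intdes a} ≃
    {s : Finset (Fin (r * j + n - ColoredPerm.intdes a)) // s.card = n} where
  toFun h := ⟨Finset.univ.image
      (fun i => (⟨h.1 i, h.2.2 i⟩ : Fin (r * j + n - ColoredPerm.intdes a))), by
    rw [Finset.card_image_of_injective _
      (fun x y e => h.2.1.injective (congrArg Fin.val e))]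
    simp⟩
  invFun s := ⟨fun i => (s.1.orderEmbOfFin s.2 i).val, by
    constructor
    · intro x y hxy
      exact (s.1.orderEmbOfFin s.2).strictMono hxy
    · intro i
      exact (s.1.orderEmbOfFin s.2 i).isLt⟩
  left_inv h := by
    obtain ⟨h, hsm, hbd⟩ := h
    apply Subtype.ext
    funext i
    have hmono : StrictMono
        (fun i => (⟨h i, hbd i⟩ : Fin (r * j + n - ColoredPerm.intdes a))) :=
      fun x y hxy => hsm hxy
    have hu := Finset.orderEmbOfFin_unique
      (f := fun i => (⟨h i, hbd i⟩ : Fin (r * j + n - ColoredPerm.intdes a)))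
      (by rw [Finset.card_image_of_injective _ hmono.injective]; simp)
      (fun x => Finset.mem_image_of_mem _ (Finset.mem_univ x)) hmono
    exact congrArg Fin.val (congrFun hu i).symm
  right_inv s := by
    obtain ⟨s, hs⟩ := s
    apply Subtype.ext
    show Finset.univ.image _ = s
    apply Finset.coe_injective
    rw [Finset.coe_image, Finset.coe_univ, Set.image_univ]
    simp only [Fin.eta]
    exact Finset.range_orderEmbOfFin s hs

end OmegaAux
end AUXDEV4

open ColoredPerm in
/-- For every `π ∈ G_{r,n}`, `Ω_{P(π)}(j) = binomial(rj + n − intdes(π), n)`. -/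
theorem omegaP_eq_choose (r n : ℕ) [NeZero r] (hn : 1 ≤ n)
    (a : ColoredPerm r n) (j : ℕ) :
    OmegaP r n j a = (r * j + n - intdes a).choose n := by
  classical
  have := Nat.card_congr
    (((OmegaAux.E1 a j).trans (OmegaAux.E2 hn a j)).trans (OmegaAux.E3 a j))
  rw [OmegaP, this, Nat.card_eq_fintype_card, Fintype.card_finset_len, Fintype.card_fin]
end
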